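/- arXiv:math/0112049 — 3 statements merged into one kernel-verified Lean document; each statement's English description precedes it below -/
import Mathlib

section
/- Let (Λ,d) be a k-graph and let e = (1,…,1) ∈ ℕ^k. Suppose (λ_j)_{j∈ℕ} is a family of morphisms with λ_j ∈ Λ^{2je} such that for every j ∈ ℕ there exist μ,ν ∈ Λ^e with λ_{j+1} = μ λ_j ν. Then there exists a unique x ∈ Λ^Δ with x(−je, je) = λ_j for all j ∈ ℕ. -/
open scoped Classical
open TopologicalSpace MeasureTheory

/-- A `k`-graph: a countable small category with a degree functor to `ℕ^k`
satisfying the unique factorisation property.  Objects are identified with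
the degree-zero morphisms. -/
structure KGraph (k : ℕ) where
  Mor : Type
  countable : Countable Mor
  src : Mor → Mor
  rng : Mor → Mor
  deg : Mor → Fin k → ℕ
  comp : (lam mu : Mor) → src lam = rng mu → Mor
  deg_src : ∀ lam, deg (src lam) = 0
  deg_rng : ∀ lam, deg (rng lam) = 0
  src_obj : ∀ v, deg v = 0 → src v = v
  rng_obj : ∀ v, deg v = 0 → rng v = v
  src_comp : ∀ lam mu h, src (comp lam mu h) = src mu
  rng_comp : ∀ lam mu h, rng (comp lam mu h) = rng lam
  deg_comp : ∀ lam mu h, deg (comp lam mu h) = deg lam + deg mu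
  id_comp : ∀ lam (h : src (rng lam) = rng lam), comp (rng lam) lam h = lam
  comp_id : ∀ lam (h : src lam = rng (src lam)), comp lam (src lam) h = lam
  assoc : ∀ l m n (h1 : src l = rng m) (h2 : src m = rng n)
      (h3 : src (comp l m h1) = rng n) (h4 : src l = rng (comp m n h2)),
      comp (comp l m h1) n h3 = comp l (comp m n h2) h4
  factor : ∀ lam (n1 n2 : Fin k → ℕ), deg lam = n1 + n2 →
      ∃! p : Mor × Mor, deg p.1 = n1 ∧ deg p.2 = n2 ∧
        ∃ h : src p.1 = rng p.2, comp p.1 p.2 h = lam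

namespace KGraph

variable {k : ℕ}

/-- The vertices (objects) of a `k`-graph are the degree-zero morphisms. -/
def IsVertex (Λ : KGraph k) (v : Λ.Mor) : Prop := Λ.deg v = 0

/-- Standing assumption (★): for each `p ∈ ℕ^k` the restrictions of `r` and `s`
to `Λ^p` are surjective (onto the vertices) and finite-to-one. -/
def Star (Λ : KGraph k) : Prop :=
  ∀ p : Fin k → ℕ,
    (∀ v, Λ.IsVertex v →
      (∃ lam, Λ.deg lam = p ∧ Λ.rng lam = v) ∧
      (∃ lam, Λ.deg lam = p ∧ Λ.src lam = v)) ∧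
    (∀ v, Λ.IsVertex v →
      {lam | Λ.deg lam = p ∧ Λ.rng lam = v}.Finite ∧
      {lam | Λ.deg lam = p ∧ Λ.src lam = v}.Finite)

/-- Irreducibility (strong connectedness) of a `k`-graph. -/
def Irreducible (Λ : KGraph k) : Prop :=
  ∀ u v, Λ.IsVertex u → Λ.IsVertex v →
    ∃ lam, Λ.deg lam ≠ 0 ∧ Λ.rng lam = u ∧ Λ.src lam = v

/-- Primitivity of a `k`-graph. -/
def Primitive (Λ : KGraph k) : Prop :=
  ∃ p : Fin k → ℕ, p ≠ 0 ∧ ∀ u v, Λ.IsVertex u → Λ.IsVertex v →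
    ∃ lam, Λ.deg lam = p ∧ Λ.rng lam = u ∧ Λ.src lam = v

/-- The degree of a morphism, viewed in `ℤ^k`. -/
def degZ (Λ : KGraph k) (lam : Λ.Mor) : Fin k → ℤ := fun i => (Λ.deg lam i : ℤ)

/-- The number of morphisms of degree `p` with range `u` and source `v`. -/
noncomputable def count (Λ : KGraph k) (p : Fin k → ℕ) (u v : Λ.Mor) : ℕ :=
  Nat.card {lam : Λ.Mor // Λ.deg lam = p ∧ Λ.rng lam = u ∧ Λ.src lam = v}

end KGraph

/-- A two-sided infinite path in a `k`-graph: a degree-preserving functor from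
the `k`-graph `Δ = {(m,n) ∈ ℤ^k × ℤ^k : m ≤ n}` to `Λ`. -/
structure TwoSidedPath {k : ℕ} (Λ : KGraph k) where
  toFun : ∀ m n : Fin k → ℤ, m ≤ n → Λ.Mor
  deg_eq : ∀ m n (h : m ≤ n) (i : Fin k), (Λ.deg (toFun m n h) i : ℤ) = n i - m i
  src_eq : ∀ m n (h : m ≤ n), Λ.src (toFun m n h) = toFun n n le_rfl
  rng_eq : ∀ m n (h : m ≤ n), Λ.rng (toFun m n h) = toFun m m le_rfl
  comp_eq : ∀ l m n (h1 : l ≤ m) (h2 : m ≤ n),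
      Λ.comp (toFun l m h1) (toFun m n h2)
        ((src_eq l m h1).trans (rng_eq m n h2).symm) = toFun l n (h1.trans h2)

/-- A one-sided infinite path in a `k`-graph: a degree-preserving functor from
the `k`-graph `Ω = {(m,n) ∈ ℕ^k × ℕ^k : m ≤ n}` to `Λ`. -/
structure OneSidedPath {k : ℕ} (Λ : KGraph k) where
  toFun : ∀ m n : Fin k → ℕ, m ≤ n → Λ.Mor
  deg_eq : ∀ m n (h : m ≤ n) (i : Fin k), Λ.deg (toFun m n h) i = n i - m i
  src_eq : ∀ m n (h : m ≤ n), Λ.src (toFun m n h) = toFun n n le_rfl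
  rng_eq : ∀ m n (h : m ≤ n), Λ.rng (toFun m n h) = toFun m m le_rfl
  comp_eq : ∀ l m n (h1 : l ≤ m) (h2 : m ≤ n),
      Λ.comp (toFun l m h1) (toFun m n h2)
        ((src_eq l m h1).trans (rng_eq m n h2).symm) = toFun l n (h1.trans h2)

namespace TwoSidedPath

variable {k : ℕ} {Λ : KGraph k}

theorem toFun_congr (x : TwoSidedPath Λ) {m n m' n' : Fin k → ℤ}
    (hm : m = m') (hn : n = n') (h : m ≤ n) (h' : m' ≤ n') :
    x.toFun m n h = x.toFun m' n' h' := by subst hm; subst hn; rfl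

/-- The vertex `x(0)` of a two-sided path. -/
def obj0 (x : TwoSidedPath Λ) : Λ.Mor := x.toFun 0 0 le_rfl

end TwoSidedPath

theorem le_add_degZ {k : ℕ} (Λ : KGraph k) (n : Fin k → ℤ) (lam : Λ.Mor) :
    n ≤ n + Λ.degZ lam :=
  Pi.le_def.mpr fun i => by
    show n i ≤ n i + (Λ.deg lam i : ℤ); omega

/-- The cylinder set `Z(λ, n) = {x ∈ Λ^Δ : x(n, n + d(λ)) = λ}`. -/
def ZCyl {k : ℕ} (Λ : KGraph k) (lam : Λ.Mor) (n : Fin k → ℤ) :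
    Set (TwoSidedPath Λ) :=
  {x | x.toFun n (n + Λ.degZ lam) (le_add_degZ Λ n lam) = lam}

/-- The topology on `Λ^Δ` generated by the cylinder sets. -/
instance {k : ℕ} (Λ : KGraph k) : TopologicalSpace (TwoSidedPath Λ) :=
  TopologicalSpace.generateFrom {S | ∃ lam n, S = ZCyl Λ lam n}

noncomputable instance {k : ℕ} (Λ : KGraph k) : MeasurableSpace (TwoSidedPath Λ) :=
  borel _

/-- The one-sided cylinder set `Z(λ) = {x ∈ Λ^Ω : x(0, d(λ)) = λ}`. -/
def OCyl {k : ℕ} (Λ : KGraph k) (lam : Λ.Mor) : Set (OneSidedPath Λ) :=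
  {x | x.toFun 0 (Λ.deg lam) (Pi.le_def.mpr fun _ => Nat.zero_le _) = lam}

/-- The topology on `Λ^Ω` generated by the cylinder sets. -/
instance {k : ℕ} (Λ : KGraph k) : TopologicalSpace (OneSidedPath Λ) :=
  TopologicalSpace.generateFrom {S | ∃ lam, S = OCyl Λ lam}

/-- The shift `σ^n` on the two-sided path space, for `n ∈ ℤ^k`. -/
def TwoSidedPath.shift {k : ℕ} {Λ : KGraph k} (n : Fin k → ℤ)
    (x : TwoSidedPath Λ) : TwoSidedPath Λ where
  toFun l m h := x.toFun (l + n) (m + n) (add_le_add_left h n)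
  deg_eq l m h i := by
    show (Λ.deg (x.toFun (l + n) (m + n) (add_le_add_left h n)) i : ℤ) = m i - l i
    have h' := x.deg_eq (l + n) (m + n) (add_le_add_left h n) i
    simp only [Pi.add_apply] at h'
    omega
  src_eq l m h := x.src_eq (l + n) (m + n) (add_le_add_left h n)
  rng_eq l m h := x.rng_eq (l + n) (m + n) (add_le_add_left h n)
  comp_eq l m m' h1 h2 :=
    x.comp_eq (l + n) (m + n) (m' + n) (add_le_add_left h1 n) (add_le_add_left h2 n)

/-- The shift `σ^p` on the one-sided path space, for `p ∈ ℕ^k`. -/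
def OneSidedPath.shift {k : ℕ} {Λ : KGraph k} (p : Fin k → ℕ)
    (x : OneSidedPath Λ) : OneSidedPath Λ where
  toFun l m h := x.toFun (l + p) (m + p) (add_le_add_left h p)
  deg_eq l m h i := by
    show Λ.deg (x.toFun (l + p) (m + p) (add_le_add_left h p)) i = m i - l i
    have h' := x.deg_eq (l + p) (m + p) (add_le_add_left h p) i
    simp only [Pi.add_apply] at h'
    omega
  src_eq l m h := x.src_eq (l + p) (m + p) (add_le_add_left h p)
  rng_eq l m h := x.rng_eq (l + p) (m + p) (add_le_add_left h p)
  comp_eq l m m' h1 h2 :=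
    x.comp_eq (l + p) (m + p) (m' + p) (add_le_add_left h1 p) (add_le_add_left h2 p)

/-- The vector `(j, …, j) ∈ ℤ^k`, i.e. `j·e` where `e = (1,…,1)`. -/
def jvecZ (k : ℕ) (j : ℕ) : Fin k → ℤ := fun _ => (j : ℤ)

theorem neg_jvecZ_le (k j : ℕ) : -(jvecZ k j) ≤ jvecZ k j :=
  Pi.le_def.mpr fun _ => by show -((j : ℤ)) ≤ (j : ℤ); omega

/-- Coercion `ℕ^k → ℤ^k`. -/
def coeZ {k : ℕ} (p : Fin k → ℕ) : Fin k → ℤ := fun i => (p i : ℤ)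

theorem coeZ_le_coeZ {k : ℕ} {m n : Fin k → ℕ} (h : m ≤ n) : coeZ m ≤ coeZ n :=
  Pi.le_def.mpr fun i => by
    show ((m i : ℤ)) ≤ (n i : ℤ)
    exact_mod_cast Pi.le_def.mp h i

theorem neg_coeZ_le {k : ℕ} (m : Fin k → ℕ) : -(coeZ m) ≤ coeZ m :=
  Pi.le_def.mpr fun i => by show -((m i : ℤ)) ≤ (m i : ℤ); omega

/-- The quantity `h(x,y) ∈ ℕ∞`:  `0` if `x(0) ≠ y(0)`, and otherwise
`1 + sup { j : x(-je, je) = y(-je, je) }`. -/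
noncomputable def hdist {k : ℕ} {Λ : KGraph k} (x y : TwoSidedPath Λ) : ℕ∞ :=
  if x.obj0 = y.obj0 then
    1 + sSup {c : ℕ∞ | ∃ j : ℕ, c = (j : ℕ∞) ∧
        x.toFun (-(jvecZ k j)) (jvecZ k j) (neg_jvecZ_le k j) =
        y.toFun (-(jvecZ k j)) (jvecZ k j) (neg_jvecZ_le k j)}
  else 0

/-- The metric `ρ(x,y) = r^{h(x,y)}`, with `r^∞ = 0`. -/
noncomputable def rho {k : ℕ} {Λ : KGraph k} (r : ℝ) (x y : TwoSidedPath Λ) : ℝ :=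
  if hdist x y = ⊤ then 0 else r ^ (hdist x y).toNat

/-- The local contracting set `E_x`. -/
def Ex {k : ℕ} {Λ : KGraph k} (x : TwoSidedPath Λ) : Set (TwoSidedPath Λ) :=
  {y | ∀ m n (h : m ≤ n), 0 ≤ m → y.toFun m n h = x.toFun m n h}

/-- The local expanding set `F_x`. -/
def Fx {k : ℕ} {Λ : KGraph k} (x : TwoSidedPath Λ) : Set (TwoSidedPath Λ) :=
  {y | ∀ m n (h : m ≤ n), n ≤ 0 → y.toFun m n h = x.toFun m n h}

/-- The restriction map `π : Λ^Δ → Λ^Ω`. -/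
def TwoSidedPath.restrict {k : ℕ} {Λ : KGraph k} (x : TwoSidedPath Λ) :
    OneSidedPath Λ where
  toFun m n h := x.toFun (coeZ m) (coeZ n) (coeZ_le_coeZ h)
  deg_eq m n h i := by
    show Λ.deg (x.toFun (coeZ m) (coeZ n) (coeZ_le_coeZ h)) i = n i - m i
    have h' := x.deg_eq (coeZ m) (coeZ n) (coeZ_le_coeZ h) i
    simp only [coeZ] at h'
    omega
  src_eq m n h := x.src_eq (coeZ m) (coeZ n) (coeZ_le_coeZ h)
  rng_eq m n h := x.rng_eq (coeZ m) (coeZ n) (coeZ_le_coeZ h)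
  comp_eq l m n h1 h2 :=
    x.comp_eq (coeZ l) (coeZ m) (coeZ n) (coeZ_le_coeZ h1) (coeZ_le_coeZ h2)

/-- Stable equivalence: `x ∼ₛ y` iff the two paths eventually agree to the right. -/
def SRel {k : ℕ} {Λ : KGraph k} (x y : TwoSidedPath Λ) : Prop :=
  ∃ m : Fin k → ℤ, ∀ n (h : m ≤ n), x.toFun m n h = y.toFun m n h

/-- Unstable equivalence: `x ∼ᵤ y` iff the two paths eventually agree to the left. -/
def URel {k : ℕ} {Λ : KGraph k} (x y : TwoSidedPath Λ) : Prop :=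
  ∃ n : Fin k → ℤ, ∀ m (h : m ≤ n), x.toFun m n h = y.toFun m n h

/-- Asymptotic equivalence: `x ∼ₐ y` iff `x ∼ₛ y` and `x ∼ᵤ y`. -/
def ARel {k : ℕ} {Λ : KGraph k} (x y : TwoSidedPath Λ) : Prop :=
  ∃ m : Fin k → ℕ, ∀ n : Fin k → ℤ, coeZ m ≤ n →
    (∀ h : coeZ m ≤ n, x.toFun (coeZ m) n h = y.toFun (coeZ m) n h) ∧
    (∀ h' : -n ≤ -(coeZ m), x.toFun (-n) (-(coeZ m)) h' = y.toFun (-n) (-(coeZ m)) h')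

/-- The groupoid `G_{s,m}` of pairs agreeing from `m ∈ ℤ^k` onwards. -/
def Gsm {k : ℕ} (Λ : KGraph k) (m : Fin k → ℤ) :
    Set (TwoSidedPath Λ × TwoSidedPath Λ) :=
  {p | ∀ n (h : m ≤ n), p.1.toFun m n h = p.2.toFun m n h}

theorem TwoSidedPath.self_mem_cyl {k : ℕ} {Λ : KGraph k} (x : TwoSidedPath Λ)
    (m n : Fin k → ℤ) (h : m ≤ n) : x ∈ ZCyl Λ (x.toFun m n h) m := by
  show x.toFun m (m + Λ.degZ (x.toFun m n h)) _ = x.toFun m n h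
  apply x.toFun_congr rfl
  funext i
  show m i + (Λ.deg (x.toFun m n h) i : ℤ) = n i
  have h' := x.deg_eq m n h i
  omega

theorem degZ_obj0 {k : ℕ} {Λ : KGraph k} (x : TwoSidedPath Λ) :
    Λ.degZ x.obj0 = 0 := by
  funext i
  show (Λ.deg (x.toFun 0 0 le_rfl) i : ℤ) = 0
  have h' := x.deg_eq 0 0 le_rfl i
  simp only [Pi.zero_apply] at h'
  omega

theorem mem_vertex_cyl {k : ℕ} {Λ : KGraph k} {x z : TwoSidedPath Λ}
    (hz : z ∈ ZCyl Λ x.obj0 0) : z.obj0 = x.obj0 := by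
  have h0 : (0 : Fin k → ℤ) = 0 + Λ.degZ x.obj0 := by rw [degZ_obj0]; simp
  calc z.obj0 = z.toFun 0 (0 + Λ.degZ x.obj0) (le_add_degZ Λ 0 x.obj0) :=
        z.toFun_congr rfl h0 le_rfl (le_add_degZ Λ 0 x.obj0)
    _ = x.obj0 := hz


section SegAux

variable {k : ℕ} {Λ : KGraph k}

theorem KGraph.comp_congr (Λ : KGraph k) {a a' b b' : Λ.Mor} (ha : a = a') (hb : b = b')
    (h : Λ.src a = Λ.rng b) (h' : Λ.src a' = Λ.rng b') :
    Λ.comp a b h = Λ.comp a' b' h' := by subst ha; subst hb; rfl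

theorem KGraph.factor_eq (Λ : KGraph k) {lam a b a' b' : Λ.Mor} {p q : Fin k → ℕ}
    (hd : Λ.deg lam = p + q)
    (ha : Λ.deg a = p) (hb : Λ.deg b = q) (hab : ∃ h, Λ.comp a b h = lam)
    (ha' : Λ.deg a' = p) (hb' : Λ.deg b' = q) (hab' : ∃ h, Λ.comp a' b' h = lam) :
    a = a' ∧ b = b' := by
  obtain ⟨P, _, hu⟩ := Λ.factor lam p q hd
  have h1 := hu (a, b) ⟨ha, hb, hab⟩
  have h2 := hu (a', b') ⟨ha', hb', hab'⟩
  rw [← h2] at h1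
  exact ⟨congrArg Prod.fst h1, congrArg Prod.snd h1⟩

/-- `σ` is the segment of `lam` between positions `a ≤ b ≤ deg lam`. -/
def IsSeg (Λ : KGraph k) (lam : Λ.Mor) (a b : Fin k → ℕ) (σ : Λ.Mor) : Prop :=
  Λ.deg σ = b - a ∧
  ∃ (α γ : Λ.Mor) (h1 : Λ.src σ = Λ.rng γ) (h2 : Λ.src α = Λ.rng (Λ.comp σ γ h1)),
    Λ.deg α = a ∧ Λ.deg γ = Λ.deg lam - b ∧ lam = Λ.comp α (Λ.comp σ γ h1) h2

theorem seg_unique {lam σ σ' : Λ.Mor} {a b : Fin k → ℕ} (hab : a ≤ b)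
    (hbd : b ≤ Λ.deg lam) (h : IsSeg Λ lam a b σ) (h' : IsSeg Λ lam a b σ') :
    σ = σ' := by
  obtain ⟨hdσ, α, γ, h1, h2, hα, hγ, hc⟩ := h
  obtain ⟨hdσ', α', γ', h1', h2', hα', hγ', hc'⟩ := h'
  have had : a ≤ Λ.deg lam := hab.trans hbd
  have hmid : Λ.deg (Λ.comp σ γ h1) = Λ.deg lam - a := by
    rw [Λ.deg_comp, hdσ, hγ]; funext i
    have u1 := Pi.le_def.mp hab i; have u2 := Pi.le_def.mp hbd i
    show b i - a i + (Λ.deg lam i - b i) = Λ.deg lam i - a i; omega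
  have hmid' : Λ.deg (Λ.comp σ' γ' h1') = Λ.deg lam - a := by
    rw [Λ.deg_comp, hdσ', hγ']; funext i
    have u1 := Pi.le_def.mp hab i; have u2 := Pi.le_def.mp hbd i
    show b i - a i + (Λ.deg lam i - b i) = Λ.deg lam i - a i; omega
  have hdl : Λ.deg lam = a + (Λ.deg lam - a) := by
    funext i; have := Pi.le_def.mp had i
    show Λ.deg lam i = a i + (Λ.deg lam i - a i); omega
  have hfe := Λ.factor_eq hdl hα hmid ⟨h2, hc.symm⟩ hα' hmid' ⟨h2', hc'.symm⟩
  have htail : Λ.comp σ γ h1 = Λ.comp σ' γ' h1' := hfe.2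
  have hdt : Λ.deg (Λ.comp σ γ h1) = (b - a) + (Λ.deg lam - b) := by
    rw [Λ.deg_comp, hdσ, hγ]
  exact (Λ.factor_eq hdt hdσ hγ ⟨h1, rfl⟩ hdσ' hγ' ⟨h1', htail.symm⟩).1

theorem seg_exists (lam : Λ.Mor) {a b : Fin k → ℕ} (hab : a ≤ b)
    (hbd : b ≤ Λ.deg lam) : ∃ σ, IsSeg Λ lam a b σ := by
  have had : a ≤ Λ.deg lam := hab.trans hbd
  have hdl : Λ.deg lam = a + (Λ.deg lam - a) := by
    funext i; have := Pi.le_def.mp had i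
    show Λ.deg lam i = a i + (Λ.deg lam i - a i); omega
  obtain ⟨⟨α, τ⟩, ⟨hα, hτ, hh, hcomp⟩, _⟩ := Λ.factor lam a (Λ.deg lam - a) hdl
  have hdt : Λ.deg τ = (b - a) + (Λ.deg lam - b) := by
    rw [hτ]; funext i; have := Pi.le_def.mp hab i; have := Pi.le_def.mp hbd i
    show Λ.deg lam i - a i = (b i - a i) + (Λ.deg lam i - b i); omega
  obtain ⟨⟨σ, γ⟩, ⟨hσ, hγ, h1, hcomp2⟩, _⟩ := Λ.factor τ (b - a) (Λ.deg lam - b) hdt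
  have h2 : Λ.src α = Λ.rng (Λ.comp σ γ h1) := by rw [hcomp2]; exact hh
  exact ⟨σ, hσ, α, γ, h1, h2, hα, hγ,
    hcomp.symm.trans (Λ.comp_congr rfl hcomp2.symm hh h2)⟩

theorem seg_self (lam : Λ.Mor) : IsSeg Λ lam 0 (Λ.deg lam) lam := by
  have h1 : Λ.src lam = Λ.rng (Λ.src lam) := (Λ.rng_obj _ (Λ.deg_src lam)).symm
  have ec : Λ.comp lam (Λ.src lam) h1 = lam := Λ.comp_id lam h1
  have h2' : Λ.src (Λ.rng lam) = Λ.rng lam := Λ.src_obj _ (Λ.deg_rng lam)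
  have h2 : Λ.src (Λ.rng lam) = Λ.rng (Λ.comp lam (Λ.src lam) h1) := by
    rw [ec]; exact h2'
  refine ⟨by simp, Λ.rng lam, Λ.src lam, h1, h2, Λ.deg_rng lam, by
    rw [Λ.deg_src]; funext i; show (0 : ℕ) = Λ.deg lam i - Λ.deg lam i; omega, ?_⟩
  exact ((Λ.comp_congr rfl ec.symm h2' h2).symm.trans (Λ.id_comp lam h2')).symm

theorem rng_seg {lam σ : Λ.Mor} {a b : Fin k → ℕ} (hab : a ≤ b)
    (hbd : b ≤ Λ.deg lam) (h : IsSeg Λ lam a b σ) :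
    IsSeg Λ lam a a (Λ.rng σ) := by
  obtain ⟨hdσ, α, γ, h1, h2, hα, hγ, hc⟩ := h
  have h1' : Λ.src (Λ.rng σ) = Λ.rng (Λ.comp σ γ h1) :=
    (Λ.src_obj _ (Λ.deg_rng σ)).trans (Λ.rng_comp σ γ h1).symm
  have h'' : Λ.src (Λ.rng (Λ.comp σ γ h1)) = Λ.rng (Λ.comp σ γ h1) :=
    Λ.src_obj _ (Λ.deg_rng _)
  have ec : Λ.comp (Λ.rng σ) (Λ.comp σ γ h1) h1' = Λ.comp σ γ h1 :=
    (Λ.comp_congr (Λ.rng_comp σ γ h1).symm rfl h1' h'').trans (Λ.id_comp _ h'')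
  have h2' : Λ.src α = Λ.rng (Λ.comp (Λ.rng σ) (Λ.comp σ γ h1) h1') := by
    rw [ec]; exact h2
  refine ⟨by rw [Λ.deg_rng]; funext i; show (0:ℕ) = a i - a i; omega,
    α, Λ.comp σ γ h1, h1', h2', hα, ?_, hc.trans (Λ.comp_congr rfl ec.symm h2 h2')⟩
  rw [Λ.deg_comp, hdσ, hγ]; funext i
  have u1 := Pi.le_def.mp hab i; have u2 := Pi.le_def.mp hbd i
  show b i - a i + (Λ.deg lam i - b i) = Λ.deg lam i - a i; omega

theorem src_seg {lam σ : Λ.Mor} {a b : Fin k → ℕ} (hab : a ≤ b)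
    (hbd : b ≤ Λ.deg lam) (h : IsSeg Λ lam a b σ) :
    IsSeg Λ lam b b (Λ.src σ) := by
  obtain ⟨hdσ, α, γ, h1, h2, hα, hγ, hc⟩ := h
  have hασ : Λ.src α = Λ.rng σ := h2.trans (Λ.rng_comp σ γ h1)
  have h1' : Λ.src (Λ.src σ) = Λ.rng γ := (Λ.src_obj _ (Λ.deg_src σ)).trans h1
  have h'' : Λ.src (Λ.rng γ) = Λ.rng γ := Λ.src_obj _ (Λ.deg_rng γ)
  have ec : Λ.comp (Λ.src σ) γ h1' = γ :=
    (Λ.comp_congr h1 rfl h1' h'').trans (Λ.id_comp γ h'')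
  have h3 : Λ.src (Λ.comp α σ hασ) = Λ.rng γ := (Λ.src_comp α σ hασ).trans h1
  have h2' : Λ.src (Λ.comp α σ hασ) = Λ.rng (Λ.comp (Λ.src σ) γ h1') := by
    rw [ec]; exact h3
  refine ⟨by rw [Λ.deg_src]; funext i; show (0:ℕ) = b i - b i; omega,
    Λ.comp α σ hασ, γ, h1', h2', ?_, hγ,
    hc.trans ((Λ.assoc α σ γ hασ h1 h3 h2).symm.trans
      (Λ.comp_congr rfl ec.symm h3 h2'))⟩
  rw [Λ.deg_comp, hα, hdσ]; funext i
  have u1 := Pi.le_def.mp hab i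
  show a i + (b i - a i) = b i; omega

theorem left_shift {lam σ : Λ.Mor} {a b : Fin k → ℕ} (μ : Λ.Mor)
    (hμ : Λ.src μ = Λ.rng lam) (h : IsSeg Λ lam a b σ) :
    IsSeg Λ (Λ.comp μ lam hμ) (Λ.deg μ + a) (Λ.deg μ + b) σ := by
  obtain ⟨hdσ, α, γ, h1, h2, hα, hγ, hc⟩ := h
  have hrl : Λ.rng lam = Λ.rng α := by rw [hc, Λ.rng_comp]
  have hμα : Λ.src μ = Λ.rng α := hμ.trans hrl
  have h4 : Λ.src μ = Λ.rng (Λ.comp α (Λ.comp σ γ h1) h2) := by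
    rw [← hc]; exact hμ
  have h3 : Λ.src (Λ.comp μ α hμα) = Λ.rng (Λ.comp σ γ h1) :=
    (Λ.src_comp μ α hμα).trans h2
  have hdeg1 : Λ.deg σ = (Λ.deg μ + b) - (Λ.deg μ + a) := by
    rw [hdσ]; funext i
    show b i - a i = (Λ.deg μ i + b i) - (Λ.deg μ i + a i); omega
  refine ⟨hdeg1,
    Λ.comp μ α hμα, γ, h1, h3, by rw [Λ.deg_comp, hα], ?_,
    (Λ.comp_congr rfl hc hμ h4).trans (Λ.assoc μ α _ hμα h2 h3 h4).symm⟩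
  rw [hγ, Λ.deg_comp]; funext i
  show Λ.deg lam i - b i = (Λ.deg μ i + Λ.deg lam i) - (Λ.deg μ i + b i); omega

theorem right_shift {lam σ : Λ.Mor} {a b : Fin k → ℕ} (ν : Λ.Mor)
    (hν : Λ.src lam = Λ.rng ν) (hbd : b ≤ Λ.deg lam) (h : IsSeg Λ lam a b σ) :
    IsSeg Λ (Λ.comp lam ν hν) a b σ := by
  obtain ⟨hdσ, α, γ, h1, h2, hα, hγ, hc⟩ := h
  have hsl : Λ.src lam = Λ.src γ := by rw [hc, Λ.src_comp, Λ.src_comp]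
  have hγν : Λ.src γ = Λ.rng ν := hsl.symm.trans hν
  have h1' : Λ.src σ = Λ.rng (Λ.comp γ ν hγν) := h1.trans (Λ.rng_comp γ ν hγν).symm
  have h5 : Λ.src (Λ.comp σ γ h1) = Λ.rng ν := (Λ.src_comp σ γ h1).trans hγν
  have hν'' : Λ.src (Λ.comp α (Λ.comp σ γ h1) h2) = Λ.rng ν :=
    (Λ.src_comp _ _ h2).trans h5
  have h6 : Λ.src α = Λ.rng (Λ.comp (Λ.comp σ γ h1) ν h5) :=
    h2.trans (Λ.rng_comp _ ν h5).symm
  have a2 : Λ.comp (Λ.comp σ γ h1) ν h5 = Λ.comp σ (Λ.comp γ ν hγν) h1' :=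
    Λ.assoc σ γ ν h1 hγν h5 h1'
  have h2' : Λ.src α = Λ.rng (Λ.comp σ (Λ.comp γ ν hγν) h1') := by
    rw [← a2]; exact h6
  refine ⟨hdσ, α, Λ.comp γ ν hγν, h1', h2', hα, ?_,
    ((Λ.comp_congr hc rfl hν hν'').trans
      (Λ.assoc α (Λ.comp σ γ h1) ν h2 h5 hν'' h6)).trans
      (Λ.comp_congr rfl a2 h6 h2')⟩
  rw [Λ.deg_comp, hγ, Λ.deg_comp]; funext i
  have u2 := Pi.le_def.mp hbd i
  show Λ.deg lam i - b i + Λ.deg ν i = (Λ.deg lam i + Λ.deg ν i) - b i; omega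

theorem seg_comp {lam σ τ : Λ.Mor} {a b c : Fin k → ℕ} (hab : a ≤ b)
    (hbc : b ≤ c) (hcd : c ≤ Λ.deg lam) (hσ : IsSeg Λ lam a b σ)
    (hτ : IsSeg Λ lam b c τ) :
    ∃ h : Λ.src σ = Λ.rng τ, IsSeg Λ lam a c (Λ.comp σ τ h) := by
  obtain ⟨hdσ, α, γ, h1, h2, hα, hγ, hc'⟩ := hσ
  have hdγ : Λ.deg γ = (c - b) + (Λ.deg lam - c) := by
    rw [hγ]; funext i
    have u1 := Pi.le_def.mp hbc i; have u2 := Pi.le_def.mp hcd i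
    show Λ.deg lam i - b i = (c i - b i) + (Λ.deg lam i - c i); omega
  obtain ⟨⟨τ', γ'⟩, ⟨hdτ', hdγ', hτγ, hcompγ⟩, _⟩ := Λ.factor γ _ _ hdγ
  dsimp only at hdτ' hdγ' hτγ hcompγ
  have hστ' : Λ.src σ = Λ.rng τ' :=
    h1.trans ((congrArg Λ.rng hcompγ.symm).trans (Λ.rng_comp τ' γ' hτγ))
  have h1x : Λ.src σ = Λ.rng (Λ.comp τ' γ' hτγ) :=
    h1.trans (congrArg Λ.rng hcompγ.symm)
  have h3 : Λ.src (Λ.comp σ τ' hστ') = Λ.rng γ' := (Λ.src_comp σ τ' hστ').trans hτγ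
  have E : Λ.comp σ γ h1 = Λ.comp (Λ.comp σ τ' hστ') γ' h3 :=
    (Λ.comp_congr rfl hcompγ.symm h1 h1x).trans
      (Λ.assoc σ τ' γ' hστ' hτγ h3 h1x).symm
  have hX : Λ.src α = Λ.rng (Λ.comp (Λ.comp σ τ' hστ') γ' h3) :=
    h2.trans (congrArg Λ.rng E)
  have Lc : lam = Λ.comp α (Λ.comp (Λ.comp σ τ' hστ') γ' h3) hX :=
    hc'.trans (Λ.comp_congr rfl E h2 hX)
  -- IsSeg lam a c (σ τ')
  have hac : IsSeg Λ lam a c (Λ.comp σ τ' hστ') := by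
    have hdeg2 : Λ.deg (Λ.comp σ τ' hστ') = c - a := by
      rw [Λ.deg_comp, hdσ, hdτ']; funext i
      have u1 := Pi.le_def.mp hab i; have u2 := Pi.le_def.mp hbc i
      show b i - a i + (c i - b i) = c i - a i; omega
    exact ⟨hdeg2, α, γ', h3, hX, hα, hdγ', Lc⟩
  -- IsSeg lam b c τ'
  have hασ : Λ.src α = Λ.rng σ := h2.trans (Λ.rng_comp σ γ h1)
  have H4 : Λ.src α = Λ.rng (Λ.comp σ (Λ.comp τ' γ' hτγ) h1x) :=
    h2.trans ((Λ.rng_comp σ γ h1).trans (Λ.rng_comp σ _ h1x).symm)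
  have H3 : Λ.src (Λ.comp α σ hασ) = Λ.rng (Λ.comp τ' γ' hτγ) :=
    (Λ.src_comp α σ hασ).trans h1x
  have hbcseg : IsSeg Λ lam b c τ' := by
    refine ⟨by rw [hdτ'], Λ.comp α σ hασ, γ', hτγ, H3, ?_, hdγ', ?_⟩
    · rw [Λ.deg_comp, hα, hdσ]; funext i
      have u1 := Pi.le_def.mp hab i
      show a i + (b i - a i) = b i; omega
    · exact (hc'.trans (Λ.comp_congr rfl (Λ.comp_congr rfl hcompγ.symm h1 h1x)
        h2 H4)).trans (Λ.assoc α σ (Λ.comp τ' γ' hτγ) hασ h1x H3 H4).symm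
  have heq : τ' = τ := seg_unique hbc hcd hbcseg hτ
  have hστ : Λ.src σ = Λ.rng τ := hστ'.trans (congrArg Λ.rng heq)
  refine ⟨hστ, ?_⟩
  rw [← Λ.comp_congr rfl heq hστ' hστ]
  exact hac

/-- The position `m + j·e` converted to `ℕ^k`. -/
def aOf (m : Fin k → ℤ) (j : ℕ) : Fin k → ℕ := fun i => (m i + j).toNat

theorem seg_step (lam : ℕ → Λ.Mor)
    (hext : ∀ j : ℕ, ∃ (mu nu : Λ.Mor) (h1 : Λ.src (lam j) = Λ.rng nu)
      (h2 : Λ.src mu = Λ.rng (Λ.comp (lam j) nu h1)),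
      Λ.deg mu = (fun _ => 1) ∧ Λ.deg nu = (fun _ => 1) ∧
      lam (j + 1) = Λ.comp mu (Λ.comp (lam j) nu h1) h2)
    {a b : Fin k → ℕ} {σ : Λ.Mor} (j : ℕ) (hb : b ≤ Λ.deg (lam j))
    (h : IsSeg Λ (lam j) a b σ) :
    IsSeg Λ (lam (j + 1)) (fun i => a i + 1) (fun i => b i + 1) σ := by
  obtain ⟨μ, ν, h1, h2, hdμ, hdν, heq⟩ := hext j
  have h'' := left_shift μ h2 (right_shift ν h1 hb h)
  rw [← heq] at h''
  have ea : Λ.deg μ + a = fun i => a i + 1 := by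
    rw [hdμ]; funext i; show 1 + a i = a i + 1; omega
  have eb : Λ.deg μ + b = fun i => b i + 1 := by
    rw [hdμ]; funext i; show 1 + b i = b i + 1; omega
  rw [ea, eb] at h''
  exact h''

theorem seg_iter (lam : ℕ → Λ.Mor)
    (hdeg : ∀ j : ℕ, Λ.deg (lam j) = fun _ => 2 * j)
    (hext : ∀ j : ℕ, ∃ (mu nu : Λ.Mor) (h1 : Λ.src (lam j) = Λ.rng nu)
      (h2 : Λ.src mu = Λ.rng (Λ.comp (lam j) nu h1)),
      Λ.deg mu = (fun _ => 1) ∧ Λ.deg nu = (fun _ => 1) ∧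
      lam (j + 1) = Λ.comp mu (Λ.comp (lam j) nu h1) h2)
    {a b : Fin k → ℕ} {σ : Λ.Mor} (j : ℕ) (hb : ∀ i, b i ≤ 2 * j)
    (h : IsSeg Λ (lam j) a b σ) (t : ℕ) :
    IsSeg Λ (lam (j + t)) (fun i => a i + t) (fun i => b i + t) σ := by
  induction t with
  | zero =>
    have ea : (fun i => a i + 0) = a := by funext i; omega
    have eb : (fun i => b i + 0) = b := by funext i; omega
    rw [ea, eb]; exact h
  | succ t ih =>
    have hb' : (fun i => b i + t) ≤ Λ.deg (lam (j + t)) := Pi.le_def.mpr fun i => by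
      have hd := congrFun (hdeg (j + t)) i
      have := hb i
      show b i + t ≤ Λ.deg (lam (j + t)) i
      omega
    have h'' := seg_step lam hext (j + t) hb' ih
    have ea : (fun i => (a i + t) + 1) = fun i => a i + (t + 1) := by funext i; omega
    have eb : (fun i => (b i + t) + 1) = fun i => b i + (t + 1) := by funext i; omega
    rw [ea, eb] at h''
    exact h''

theorem seg_agree (lam : ℕ → Λ.Mor)
    (hdeg : ∀ j : ℕ, Λ.deg (lam j) = fun _ => 2 * j)
    (hext : ∀ j : ℕ, ∃ (mu nu : Λ.Mor) (h1 : Λ.src (lam j) = Λ.rng nu)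
      (h2 : Λ.src mu = Λ.rng (Λ.comp (lam j) nu h1)),
      Λ.deg mu = (fun _ => 1) ∧ Λ.deg nu = (fun _ => 1) ∧
      lam (j + 1) = Λ.comp mu (Λ.comp (lam j) nu h1) h2)
    {m n : Fin k → ℤ} (hmn : m ≤ n) {j j' : ℕ} {σ σ' : Λ.Mor}
    (hm : ∀ i, -(j : ℤ) ≤ m i) (hn : ∀ i, n i ≤ (j : ℤ))
    (hm' : ∀ i, -(j' : ℤ) ≤ m i) (hn' : ∀ i, n i ≤ (j' : ℤ))
    (h : IsSeg Λ (lam j) (aOf m j) (aOf n j) σ)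
    (h' : IsSeg Λ (lam j') (aOf m j') (aOf n j') σ') : σ = σ' := by
  set J := max j j' with hJ
  have hlift : ∀ (j₀ : ℕ) (σ₀ : Λ.Mor), j₀ ≤ J → (∀ i, -(j₀ : ℤ) ≤ m i) →
      (∀ i, n i ≤ (j₀ : ℤ)) → IsSeg Λ (lam j₀) (aOf m j₀) (aOf n j₀) σ₀ →
      IsSeg Λ (lam J) (aOf m J) (aOf n J) σ₀ := by
    intro j₀ σ₀ hjJ hm₀ hn₀ h₀
    have hb : ∀ i, aOf n j₀ i ≤ 2 * j₀ := fun i => by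
      have := hn₀ i; show (n i + j₀).toNat ≤ 2 * j₀; omega
    have hit := seg_iter lam hdeg hext j₀ hb h₀ (J - j₀)
    have ej : j₀ + (J - j₀) = J := by omega
    rw [ej] at hit
    have ea : (fun i => aOf m j₀ i + (J - j₀)) = aOf m J := by
      funext i; have := hm₀ i
      show (m i + j₀).toNat + (J - j₀) = (m i + J).toNat; omega
    have eb : (fun i => aOf n j₀ i + (J - j₀)) = aOf n J := by
      funext i; have := hm₀ i; have := Pi.le_def.mp hmn i
      show (n i + j₀).toNat + (J - j₀) = (n i + J).toNat; omega
    rw [ea, eb] at hit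
    exact hit
  have H := hlift j σ (le_max_left _ _) hm hn h
  have H' := hlift j' σ' (le_max_right _ _) hm' hn' h'
  have hab : aOf m J ≤ aOf n J := Pi.le_def.mpr fun i => by
    have := Pi.le_def.mp hmn i
    show (m i + J).toNat ≤ (n i + J).toNat; omega
  have hbd : aOf n J ≤ Λ.deg (lam J) := Pi.le_def.mpr fun i => by
    have hd := congrFun (hdeg J) i
    have h1 := hn i
    have h2 : (j : ℤ) ≤ J := by exact_mod_cast Nat.cast_le.mpr (le_max_left j j')
    show (n i + J).toNat ≤ Λ.deg (lam J) i
    omega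
  exact seg_unique hab hbd H H'

theorem TwoSidedPath.ext'' {x y : TwoSidedPath Λ} (h : x.toFun = y.toFun) :
    x = y := by
  cases x; cases y; cases h; rfl

end SegAux

/-- A consistent family `λ_j ∈ Λ^{2je}` (with `λ_{j+1} = μ λ_j ν`
for some `μ, ν ∈ Λ^e`) determines a unique two-sided path `x` with
`x(-je, je) = λ_j` for all `j`. -/
theorem twoSidedPath_of_consistent_family {k : ℕ} (hk : 0 < k) (Λ : KGraph k)
    (lam : ℕ → Λ.Mor)
    (hdeg : ∀ j : ℕ, Λ.deg (lam j) = fun _ => 2 * j)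
    (hext : ∀ j : ℕ, ∃ (mu nu : Λ.Mor) (h1 : Λ.src (lam j) = Λ.rng nu)
      (h2 : Λ.src mu = Λ.rng (Λ.comp (lam j) nu h1)),
      Λ.deg mu = (fun _ => 1) ∧ Λ.deg nu = (fun _ => 1) ∧
      lam (j + 1) = Λ.comp mu (Λ.comp (lam j) nu h1) h2) :
    ∃! x : TwoSidedPath Λ,
      ∀ j : ℕ, x.toFun (-(jvecZ k j)) (jvecZ k j) (neg_jvecZ_le k j) = lam j := by
  classical
  -- a bound for a vector in ℤ^k
  set B : (Fin k → ℤ) → ℕ := fun m => Finset.univ.sup fun i => (m i).natAbs with hBdef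
  have hBle : ∀ (m : Fin k → ℤ) (i : Fin k), (m i).natAbs ≤ B m := fun m i => by
    rw [hBdef]; exact Finset.le_sup (f := fun i => (m i).natAbs) (Finset.mem_univ i)
  have hadm : ∀ (m : Fin k → ℤ) (j : ℕ), B m ≤ j →
      ∀ i, -(j : ℤ) ≤ m i ∧ m i ≤ (j : ℤ) := by
    intro m j hj i
    have := hBle m i
    omega
  -- existence of segments
  have hex : ∀ (m n : Fin k → ℤ), m ≤ n →
      ∃ σ, IsSeg Λ (lam (max (B m) (B n))) (aOf m (max (B m) (B n)))
        (aOf n (max (B m) (B n))) σ := by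
    intro m n h
    apply seg_exists
    · exact Pi.le_def.mpr fun i => by
        have := Pi.le_def.mp h i
        show (m i + (max (B m) (B n) : ℕ)).toNat ≤ (n i + (max (B m) (B n) : ℕ)).toNat
        omega
    · exact Pi.le_def.mpr fun i => by
        have h1 := (hadm n (max (B m) (B n)) (le_max_right _ _) i).2
        have hd : Λ.deg (lam (max (B m) (B n))) i = 2 * max (B m) (B n) := by
          simp [hdeg]
        show (n i + (max (B m) (B n) : ℕ)).toNat ≤ Λ.deg (lam (max (B m) (B n))) i
        omega
  choose f hf using hex
  -- key characterisation of f at any admissible level j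
  have key : ∀ (m n : Fin k → ℤ) (h : m ≤ n) (j : ℕ),
      (∀ i, -(j : ℤ) ≤ m i) → (∀ i, n i ≤ (j : ℤ)) →
      IsSeg Λ (lam j) (aOf m j) (aOf n j) (f m n h) := by
    intro m n h j hm hn
    have hab : aOf m j ≤ aOf n j := Pi.le_def.mpr fun i => by
      have := Pi.le_def.mp h i
      show (m i + j).toNat ≤ (n i + j).toNat; omega
    have hbd : aOf n j ≤ Λ.deg (lam j) := Pi.le_def.mpr fun i => by
      have h1 := hn i
      have hd : Λ.deg (lam j) i = 2 * j := by simp [hdeg]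
      show (n i + j).toNat ≤ Λ.deg (lam j) i; omega
    obtain ⟨σ, hσ⟩ := seg_exists (lam j) hab hbd
    have e := seg_agree lam hdeg hext h hm hn
      (fun i => (hadm m _ (le_max_left _ _) i).1)
      (fun i => (hadm n _ (le_max_right _ _) i).2) hσ (hf m n h)
    exact e ▸ hσ
  -- bounds helper
  have habd : ∀ (m n : Fin k → ℤ) (h : m ≤ n) (j : ℕ), (∀ i, n i ≤ (j : ℤ)) →
      aOf m j ≤ aOf n j ∧ aOf n j ≤ Λ.deg (lam j) := by
    intro m n h j hn
    constructor
    · exact Pi.le_def.mpr fun i => by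
        have := Pi.le_def.mp h i
        show (m i + j).toNat ≤ (n i + j).toNat; omega
    · exact Pi.le_def.mpr fun i => by
        have h1 := hn i
        have hd : Λ.deg (lam j) i = 2 * j := by simp [hdeg]
        show (n i + j).toNat ≤ Λ.deg (lam j) i; omega
  -- the structure fields
  have Fdeg : ∀ m n (h : m ≤ n) (i : Fin k),
      (Λ.deg (f m n h) i : ℤ) = n i - m i := by
    intro m n h i
    set j := max (B m) (B n) with hj
    have K := key m n h j (fun i => (hadm m j (le_max_left _ _) i).1)
      (fun i => (hadm n j (le_max_right _ _) i).2)
    have hd := congrFun K.1 i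
    simp only [Pi.sub_apply, aOf] at hd
    have hmi := (hadm m j (le_max_left _ _) i).1
    have hni := (hadm n j (le_max_right _ _) i).2
    have hmn := Pi.le_def.mp h i
    omega
  have Fsrc : ∀ m n (h : m ≤ n), Λ.src (f m n h) = f n n le_rfl := by
    intro m n h
    set j := max (B m) (B n) with hj
    have hm1 : ∀ i, -(j : ℤ) ≤ m i := fun i => (hadm m j (le_max_left _ _) i).1
    have hn1 : ∀ i, n i ≤ (j : ℤ) := fun i => (hadm n j (le_max_right _ _) i).2
    have hn0 : ∀ i, -(j : ℤ) ≤ n i := fun i => (hadm n j (le_max_right _ _) i).1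
    have K := key m n h j hm1 hn1
    have K2 := key n n le_rfl j hn0 hn1
    obtain ⟨hab, hbd⟩ := habd m n h j hn1
    exact seg_unique le_rfl hbd (src_seg hab hbd K) K2
  have Frng : ∀ m n (h : m ≤ n), Λ.rng (f m n h) = f m m le_rfl := by
    intro m n h
    set j := max (B m) (B n) with hj
    have hm1 : ∀ i, -(j : ℤ) ≤ m i := fun i => (hadm m j (le_max_left _ _) i).1
    have hn1 : ∀ i, n i ≤ (j : ℤ) := fun i => (hadm n j (le_max_right _ _) i).2
    have hm2 : ∀ i, m i ≤ (j : ℤ) := fun i => (hadm m j (le_max_left _ _) i).2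
    have K := key m n h j hm1 hn1
    have K2 := key m m le_rfl j hm1 hm2
    obtain ⟨hab, hbd⟩ := habd m n h j hn1
    obtain ⟨_, hbd'⟩ := habd m m le_rfl j hm2
    exact seg_unique le_rfl hbd' (rng_seg hab hbd K) K2
  have Fcomp : ∀ l m n (h1 : l ≤ m) (h2 : m ≤ n)
      (h3 : Λ.src (f l m h1) = Λ.rng (f m n h2)),
      Λ.comp (f l m h1) (f m n h2) h3 = f l n (h1.trans h2) := by
    intro l m n h1 h2 h3
    set j := max (B l) (B n) with hj
    have hl1 : ∀ i, -(j : ℤ) ≤ l i := fun i => (hadm l j (le_max_left _ _) i).1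
    have hn1 : ∀ i, n i ≤ (j : ℤ) := fun i => (hadm n j (le_max_right _ _) i).2
    have hm1 : ∀ i, -(j : ℤ) ≤ m i := fun i =>
      le_trans (hl1 i) (Pi.le_def.mp h1 i)
    have hm2 : ∀ i, m i ≤ (j : ℤ) := fun i =>
      le_trans (Pi.le_def.mp h2 i) (hn1 i)
    have K1 := key l m h1 j hl1 hm2
    have K2 := key m n h2 j hm1 hn1
    have K3 := key l n (h1.trans h2) j hl1 hn1
    obtain ⟨hab, _⟩ := habd l m h1 j hm2
    obtain ⟨hbc, hcd⟩ := habd m n h2 j hn1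
    obtain ⟨h', hIs⟩ := seg_comp hab hbc hcd K1 K2
    exact seg_unique (hab.trans hbc) hcd hIs K3
  -- the two-sided path
  set x : TwoSidedPath Λ :=
    ⟨f, Fdeg, Fsrc, Frng, fun l m n h1 h2 => Fcomp l m n h1 h2 _⟩ with hx
  have hxprop : ∀ j : ℕ,
      x.toFun (-(jvecZ k j)) (jvecZ k j) (neg_jvecZ_le k j) = lam j := by
    intro j
    have hm : ∀ i, -(j : ℤ) ≤ (-(jvecZ k j)) i := fun i => le_rfl
    have hn : ∀ i, (jvecZ k j) i ≤ (j : ℤ) := fun i => le_rfl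
    have K := key (-(jvecZ k j)) (jvecZ k j) (neg_jvecZ_le k j) j hm hn
    have e0 : aOf (-(jvecZ k j)) j = 0 := by
      funext i
      show (-(j : ℤ) + j).toNat = 0; omega
    have e1 : aOf (jvecZ k j) j = Λ.deg (lam j) := by
      funext i
      have hd : Λ.deg (lam j) i = 2 * j := by simp [hdeg]
      show ((j : ℤ) + j).toNat = Λ.deg (lam j) i; omega
    rw [e0, e1] at K
    exact seg_unique (Pi.le_def.mpr fun i => Nat.zero_le _) le_rfl K
      (seg_self (lam j))
  refine ⟨x, hxprop, ?_⟩
  intro y hy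
  -- characterise segments of y
  have ykey : ∀ (m n : Fin k → ℤ) (h : m ≤ n) (j : ℕ),
      (∀ i, -(j : ℤ) ≤ m i) → (∀ i, n i ≤ (j : ℤ)) →
      IsSeg Λ (lam j) (aOf m j) (aOf n j) (y.toFun m n h) := by
    intro m n h j hm hn
    have hme : -(jvecZ k j) ≤ m := Pi.le_def.mpr fun i =>
      show -(j : ℤ) ≤ m i from hm i
    have hne : n ≤ jvecZ k j := Pi.le_def.mpr fun i =>
      show n i ≤ (j : ℤ) from hn i
    set α := y.toFun (-(jvecZ k j)) m hme with hαdef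
    set σ := y.toFun m n h with hσdef
    set γ := y.toFun n (jvecZ k j) hne with hγdef
    have h1 : Λ.src σ = Λ.rng γ :=
      (y.src_eq m n h).trans (y.rng_eq n _ hne).symm
    have c1 : Λ.comp σ γ h1 = y.toFun m (jvecZ k j) (h.trans hne) :=
      y.comp_eq m n (jvecZ k j) h hne
    have h2 : Λ.src α = Λ.rng (Λ.comp σ γ h1) := by
      rw [c1, y.rng_eq, y.src_eq]
    have h2' : Λ.src α = Λ.rng (y.toFun m (jvecZ k j) (h.trans hne)) :=
      (y.src_eq _ m hme).trans (y.rng_eq m _ (h.trans hne)).symm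
    have eqn : lam j = Λ.comp α (Λ.comp σ γ h1) h2 := by
      refine ((Λ.comp_congr rfl c1 h2 h2').trans ?_).symm
      exact (y.comp_eq (-(jvecZ k j)) m (jvecZ k j) hme (h.trans hne)).trans (hy j)
    have hdσ : Λ.deg σ = aOf n j - aOf m j := by
      funext i
      have hd := y.deg_eq m n h i
      rw [← hσdef] at hd
      have u1 := hm i; have u2 := hn i; have u3 := Pi.le_def.mp h i
      show Λ.deg σ i = (n i + j).toNat - (m i + j).toNat; omega
    have hα : Λ.deg α = aOf m j := by
      funext i
      have hd := y.deg_eq (-(jvecZ k j)) m hme i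
      rw [← hαdef] at hd
      have e' : (-(jvecZ k j)) i = -(j : ℤ) := rfl
      rw [e'] at hd
      show Λ.deg α i = (m i + j).toNat; omega
    have hγ : Λ.deg γ = Λ.deg (lam j) - aOf n j := by
      funext i
      have hd := y.deg_eq n (jvecZ k j) hne i
      rw [← hγdef] at hd
      have e' : (jvecZ k j) i = (j : ℤ) := rfl
      rw [e'] at hd
      have hdl : Λ.deg (lam j) i = 2 * j := by simp [hdeg]
      have u2 := hn i
      have u3 := hm i
      have u4 := Pi.le_def.mp h i
      simp only [Pi.sub_apply, aOf]
      omega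
    exact ⟨hdσ, α, γ, h1, h2, hα, hγ, eqn⟩
  have htf : ∀ m n (h : m ≤ n), y.toFun m n h = f m n h := by
    intro m n h
    set j := max (B m) (B n) with hj
    have hm1 : ∀ i, -(j : ℤ) ≤ m i := fun i => (hadm m j (le_max_left _ _) i).1
    have hn1 : ∀ i, n i ≤ (j : ℤ) := fun i => (hadm n j (le_max_right _ _) i).2
    obtain ⟨hab, hbd⟩ := habd m n h j hn1
    exact seg_unique hab hbd (ykey m n h j hm1 hn1) (key m n h j hm1 hn1)
  exact TwoSidedPath.ext''
    (funext fun m => funext fun n => funext fun h => htf m n h)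
end

section
/- Let (Λ,d) be a primitive k-graph satisfying the standing assumption (★). Then the shift action σ on Λ^Δ is topologically mixing: for any two nonempty open sets U and V in Λ^Δ there is Q ∈ ℤ^k such that U ∩ σ^q(V) ≠ ∅ for all q ∈ ℤ^k with q ≥ Q. -/
open scoped Classical
open TopologicalSpace MeasureTheory

namespace KGraph

variable {k : ℕ} {Λ : KGraph k}

/-- Total composition: composes when composable, otherwise returns the first argument. -/
noncomputable def cmp (Λ : KGraph k) (a b : Λ.Mor) : Λ.Mor :=
  if h : Λ.src a = Λ.rng b then Λ.comp a b h else a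

theorem cmp_def {a b : Λ.Mor} (h : Λ.src a = Λ.rng b) : Λ.cmp a b = Λ.comp a b h :=
  dif_pos h

theorem src_cmp {a b : Λ.Mor} (h : Λ.src a = Λ.rng b) : Λ.src (Λ.cmp a b) = Λ.src b := by
  rw [cmp_def h]; exact Λ.src_comp a b h

theorem rng_cmp {a b : Λ.Mor} (h : Λ.src a = Λ.rng b) : Λ.rng (Λ.cmp a b) = Λ.rng a := by
  rw [cmp_def h]; exact Λ.rng_comp a b h

theorem deg_cmp {a b : Λ.Mor} (h : Λ.src a = Λ.rng b) :
    Λ.deg (Λ.cmp a b) = Λ.deg a + Λ.deg b := by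
  rw [cmp_def h]; exact Λ.deg_comp a b h

theorem cmp_assoc {a b c : Λ.Mor} (h1 : Λ.src a = Λ.rng b) (h2 : Λ.src b = Λ.rng c) :
    Λ.cmp (Λ.cmp a b) c = Λ.cmp a (Λ.cmp b c) := by
  have h3 : Λ.src (Λ.cmp a b) = Λ.rng c := (src_cmp h1).trans h2
  have h4 : Λ.src a = Λ.rng (Λ.cmp b c) := h1.trans (rng_cmp h2).symm
  have h3' : Λ.src (Λ.comp a b h1) = Λ.rng c := by rw [Λ.src_comp]; exact h2
  have h4' : Λ.src a = Λ.rng (Λ.comp b c h2) := by rw [Λ.rng_comp]; exact h1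
  calc Λ.cmp (Λ.cmp a b) c = Λ.cmp (Λ.comp a b h1) c := by rw [cmp_def h1]
    _ = Λ.comp (Λ.comp a b h1) c h3' := cmp_def h3'
    _ = Λ.comp a (Λ.comp b c h2) h4' := Λ.assoc a b c h1 h2 h3' h4'
    _ = Λ.cmp a (Λ.comp b c h2) := (cmp_def h4').symm
    _ = Λ.cmp a (Λ.cmp b c) := by rw [cmp_def h2]

theorem cmp_rng_left (a : Λ.Mor) : Λ.cmp (Λ.rng a) a = a := by
  have h : Λ.src (Λ.rng a) = Λ.rng a := Λ.src_obj _ (Λ.deg_rng a)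
  rw [cmp_def h]; exact Λ.id_comp a h

theorem cmp_src_right (a : Λ.Mor) : Λ.cmp a (Λ.src a) = a := by
  have h : Λ.src a = Λ.rng (Λ.src a) := (Λ.rng_obj _ (Λ.deg_src a)).symm
  rw [cmp_def h]; exact Λ.comp_id a h

/-- `F` factors as `A ∘ C ∘ B`. -/
def Splits3 (Λ : KGraph k) (F A C B : Λ.Mor) : Prop :=
  Λ.src A = Λ.rng C ∧ Λ.src C = Λ.rng B ∧ Λ.cmp A (Λ.cmp C B) = F

theorem Splits3.rng_eq' {F A C B : Λ.Mor} (s : Λ.Splits3 F A C B) : Λ.rng F = Λ.rng A := by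
  obtain ⟨h1, h2, h3⟩ := s
  rw [← h3, rng_cmp (h1.trans (rng_cmp h2).symm)]

theorem Splits3.src_eq' {F A C B : Λ.Mor} (s : Λ.Splits3 F A C B) : Λ.src F = Λ.src B := by
  obtain ⟨h1, h2, h3⟩ := s
  rw [← h3, src_cmp (h1.trans (rng_cmp h2).symm), src_cmp h2]

theorem Splits3.deg_eq' {F A C B : Λ.Mor} (s : Λ.Splits3 F A C B) :
    Λ.deg F = Λ.deg A + (Λ.deg C + Λ.deg B) := by
  obtain ⟨h1, h2, h3⟩ := s
  rw [← h3, deg_cmp (h1.trans (rng_cmp h2).symm), deg_cmp h2]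

theorem splits3_unique {F A1 C1 B1 A2 C2 B2 : Λ.Mor}
    (s1 : Λ.Splits3 F A1 C1 B1) (s2 : Λ.Splits3 F A2 C2 B2)
    (hA : Λ.deg A1 = Λ.deg A2) (hC : Λ.deg C1 = Λ.deg C2) : C1 = C2 := by
  have hB : Λ.deg B1 = Λ.deg B2 := by
    have h := s1.deg_eq'.symm.trans s2.deg_eq'
    rw [hA, hC] at h
    exact add_left_cancel (add_left_cancel h)
  obtain ⟨a1, b1, e1⟩ := s1
  obtain ⟨a2, b2, e2⟩ := s2
  have k1 : Λ.src A1 = Λ.rng (Λ.cmp C1 B1) := a1.trans (rng_cmp b1).symm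
  have k2 : Λ.src A2 = Λ.rng (Λ.cmp C2 B2) := a2.trans (rng_cmp b2).symm
  have hdeg : Λ.deg F = Λ.deg A1 + Λ.deg (Λ.cmp C1 B1) := by
    rw [← e1, deg_cmp k1]
  obtain ⟨P, hP, hPu⟩ := Λ.factor F (Λ.deg A1) (Λ.deg (Λ.cmp C1 B1)) hdeg
  have m1 : (A1, Λ.cmp C1 B1) = P :=
    hPu _ ⟨rfl, rfl, k1, by rw [← cmp_def k1]; exact e1⟩
  have m2 : (A2, Λ.cmp C2 B2) = P :=
    hPu _ ⟨hA.symm, show Λ.deg (Λ.cmp C2 B2) = Λ.deg (Λ.cmp C1 B1) by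
      rw [deg_cmp b2, deg_cmp b1, hC, hB], k2,
      by rw [← cmp_def k2]; exact e2⟩
  have hCB : Λ.cmp C1 B1 = Λ.cmp C2 B2 := by
    have := m1.trans m2.symm
    exact congrArg Prod.snd this
  have hdeg2 : Λ.deg (Λ.cmp C1 B1) = Λ.deg C1 + Λ.deg B1 := deg_cmp b1
  obtain ⟨P2, hP2, hP2u⟩ := Λ.factor (Λ.cmp C1 B1) (Λ.deg C1) (Λ.deg B1) hdeg2
  have n1 : (C1, B1) = P2 := hP2u _ ⟨rfl, rfl, b1, by rw [← cmp_def b1]⟩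
  have n2 : (C2, B2) = P2 :=
    hP2u _ ⟨hC.symm, hB.symm, b2, by rw [← cmp_def b2]; exact hCB.symm⟩
  exact congrArg Prod.fst (n1.trans n2.symm)

theorem splits3_exists (F : Λ.Mor) (a b c : Fin k → ℕ) (h : Λ.deg F = a + (b + c)) :
    ∃ A C B, Λ.Splits3 F A C B ∧ Λ.deg A = a ∧ Λ.deg C = b ∧ Λ.deg B = c := by
  obtain ⟨⟨A, R⟩, ⟨hA, hR, hsr, hcomp⟩, -⟩ := Λ.factor F a (b + c) h
  obtain ⟨⟨C, B⟩, ⟨hC, hB, hsr2, hcomp2⟩, -⟩ := Λ.factor R b c hR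
  refine ⟨A, C, B, ⟨?_, hsr2, ?_⟩, hA, hC, hB⟩
  · rw [hsr, ← hcomp2, Λ.rng_comp]
  · have hR' : Λ.cmp C B = R := by rw [cmp_def hsr2]; exact hcomp2
    rw [hR']
    rw [cmp_def (show Λ.src A = Λ.rng R from hsr)]
    exact hcomp

theorem splits3_trans {F G A2 B2 A C B : Λ.Mor}
    (t : Λ.Splits3 F A2 G B2) (s : Λ.Splits3 G A C B) :
    Λ.Splits3 F (Λ.cmp A2 A) C (Λ.cmp B B2) := by
  obtain ⟨ta, tb, te⟩ := t
  obtain ⟨sa, sb, se⟩ := s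
  have hA : Λ.src A = Λ.rng (Λ.cmp C B) := sa.trans (rng_cmp sb).symm
  have hGA : Λ.rng G = Λ.rng A := by rw [← se, rng_cmp hA]
  have hGB : Λ.src G = Λ.src B := by rw [← se, src_cmp hA, src_cmp sb]
  have hA2A : Λ.src A2 = Λ.rng A := ta.trans hGA
  have hBB2 : Λ.src B = Λ.rng B2 := hGB ▸ tb
  have hCB2 : Λ.src (Λ.cmp C B) = Λ.rng B2 := (src_cmp sb).trans hBB2
  refine ⟨(src_cmp hA2A).trans sa, sb.trans (rng_cmp hBB2).symm, ?_⟩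
  rw [← cmp_assoc sb hBB2]
  have hA' : Λ.src A = Λ.rng (Λ.cmp (Λ.cmp C B) B2) := hA.trans (rng_cmp hCB2).symm
  rw [cmp_assoc hA2A hA', ← cmp_assoc hA hCB2, se, te]

theorem splits3_split {F A C B C1 C2 : Λ.Mor} (s : Λ.Splits3 F A C B)
    (hc : Λ.src C1 = Λ.rng C2) (hC : Λ.cmp C1 C2 = C) :
    Λ.Splits3 F A C1 (Λ.cmp C2 B) ∧ Λ.Splits3 F (Λ.cmp A C1) C2 B := by
  obtain ⟨sa, sb, se⟩ := s
  have h1 : Λ.rng C = Λ.rng C1 := by rw [← hC, rng_cmp hc]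
  have h2 : Λ.src C2 = Λ.rng B := by rw [← src_cmp hc, hC]; exact sb
  have e1 : Λ.cmp A (Λ.cmp C1 (Λ.cmp C2 B)) = F := by
    rw [← cmp_assoc hc h2, hC]; exact se
  have f1 : Λ.src A = Λ.rng C1 := sa.trans h1
  have f2 : Λ.src C1 = Λ.rng (Λ.cmp C2 B) := hc.trans (rng_cmp h2).symm
  refine ⟨⟨f1, f2, e1⟩, ⟨(src_cmp f1).trans hc, h2, ?_⟩⟩
  rw [cmp_assoc f1 f2]; exact e1

theorem splits3_left_split {F A C B A1 A2 : Λ.Mor} (s : Λ.Splits3 F A C B)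
    (ha : Λ.src A1 = Λ.rng A2) (hA : Λ.cmp A1 A2 = A) :
    Λ.Splits3 F A1 A2 (Λ.cmp C B) := by
  obtain ⟨sa, sb, se⟩ := s
  have h2 : Λ.src A2 = Λ.rng (Λ.cmp C B) := by
    rw [← src_cmp ha, hA]; exact sa.trans (rng_cmp sb).symm
  refine ⟨ha, h2, ?_⟩
  rw [← cmp_assoc ha h2, hA]; exact se

theorem splits3_absorb {F A C B B1 B2 : Λ.Mor} (s : Λ.Splits3 F A C B)
    (hb : Λ.src B1 = Λ.rng B2) (hB : Λ.cmp B1 B2 = B) :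
    Λ.Splits3 F A (Λ.cmp C B1) B2 := by
  obtain ⟨sa, sb, se⟩ := s
  have hCB1 : Λ.src C = Λ.rng B1 := by rw [sb, ← hB, rng_cmp hb]
  refine ⟨sa.trans (rng_cmp hCB1).symm, (src_cmp hCB1).trans hb, ?_⟩
  rw [cmp_assoc hCB1 hb, hB]; exact se

theorem splits3_right_split {F A C B B1 B2 : Λ.Mor} (s : Λ.Splits3 F A C B)
    (hb : Λ.src B1 = Λ.rng B2) (hB : Λ.cmp B1 B2 = B) :
    Λ.Splits3 F (Λ.cmp A C) B1 B2 := by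
  obtain ⟨sa, sb, se⟩ := s
  have f1 : Λ.src (Λ.cmp A C) = Λ.rng B1 := by
    rw [src_cmp sa, sb, ← hB, rng_cmp hb]
  refine ⟨f1, hb, ?_⟩
  rw [hB, cmp_assoc sa sb]; exact se

theorem splits3_intro {F C B : Λ.Mor} (h : Λ.src C = Λ.rng B) (he : Λ.cmp C B = F) :
    Λ.Splits3 F (Λ.rng C) C B := by
  refine ⟨Λ.src_obj _ (Λ.deg_rng C), h, ?_⟩
  have h2 : Λ.rng (Λ.cmp C B) = Λ.rng C := rng_cmp h
  rw [← h2, cmp_rng_left]; exact he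

end KGraph
/-- Coordinatewise `Int.toNat`. -/
def toNv {k : ℕ} (v : Fin k → ℤ) : Fin k → ℕ := fun i => (v i).toNat

section PathLemmas

variable {k : ℕ} {Λ : KGraph k}

theorem deg_toFun (x : TwoSidedPath Λ) (m n : Fin k → ℤ) (h : m ≤ n) :
    Λ.deg (x.toFun m n h) = toNv (n - m) := by
  funext i
  have h1 := x.deg_eq m n h i
  simp only [toNv, Pi.sub_apply]
  omega

theorem cmp_toFun (x : TwoSidedPath Λ) (l m n : Fin k → ℤ) (h1 : l ≤ m) (h2 : m ≤ n) :
    Λ.cmp (x.toFun l m h1) (x.toFun m n h2) = x.toFun l n (h1.trans h2) := by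
  rw [KGraph.cmp_def ((x.src_eq l m h1).trans (x.rng_eq m n h2).symm)]
  exact x.comp_eq l m n h1 h2

theorem path_splits3 (x : TwoSidedPath Λ) {m m' n' n : Fin k → ℤ}
    (h1 : m ≤ m') (h2 : m' ≤ n') (h3 : n' ≤ n) (h : m ≤ n) :
    Λ.Splits3 (x.toFun m n h) (x.toFun m m' h1) (x.toFun m' n' h2) (x.toFun n' n h3) := by
  refine ⟨(x.src_eq m m' h1).trans (x.rng_eq m' n' h2).symm,
    (x.src_eq m' n' h2).trans (x.rng_eq n' n h3).symm, ?_⟩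
  rw [cmp_toFun, cmp_toFun]

theorem sub_eq (z x : TwoSidedPath Λ) {m m' n' n : Fin k → ℤ}
    (h1 : m ≤ m') (h2 : m' ≤ n') (h3 : n' ≤ n) (h : m ≤ n)
    (hzx : z.toFun m n h = x.toFun m n h) :
    z.toFun m' n' h2 = x.toFun m' n' h2 := by
  have sz := path_splits3 z h1 h2 h3 h
  have sx := path_splits3 x h1 h2 h3 h
  rw [hzx] at sz
  exact KGraph.splits3_unique sz sx
    ((deg_toFun z m m' h1).trans (deg_toFun x m m' h1).symm)
    ((deg_toFun z m' n' h2).trans (deg_toFun x m' n' h2).symm)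

theorem endpoint_eq (x : TwoSidedPath Λ) (m n : Fin k → ℤ) (h : m ≤ n) :
    m + Λ.degZ (x.toFun m n h) = n := by
  funext i
  have h1 := x.deg_eq m n h i
  show m i + (Λ.deg (x.toFun m n h) i : ℤ) = n i
  omega

theorem mem_cyl_iff (x z : TwoSidedPath Λ) (m n : Fin k → ℤ) (h : m ≤ n) :
    z ∈ ZCyl Λ (x.toFun m n h) m ↔ z.toFun m n h = x.toFun m n h := by
  have E : z.toFun m (m + Λ.degZ (x.toFun m n h)) (le_add_degZ Λ m _) = z.toFun m n h :=
    z.toFun_congr rfl (endpoint_eq x m n h) _ _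
  show z.toFun m (m + Λ.degZ (x.toFun m n h)) (le_add_degZ Λ m _) = x.toFun m n h ↔ _
  rw [E]

theorem cyl_sub (x : TwoSidedPath Λ) {m m' n' n : Fin k → ℤ}
    (h1 : m ≤ m') (h2 : m' ≤ n') (h3 : n' ≤ n) (h : m ≤ n) :
    ZCyl Λ (x.toFun m n h) m ⊆ ZCyl Λ (x.toFun m' n' h2) m' := fun z hz =>
  (mem_cyl_iff x z m' n' h2).2 (sub_eq z x h1 h2 h3 h ((mem_cyl_iff x z m n h).1 hz))

theorem exists_j {k : ℕ} (v : Fin k → ℤ) : ∃ j : ℕ, ∀ i, v i ≤ (j : ℤ) := by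
  refine ⟨Finset.univ.sup fun i => (v i).toNat, fun i => ?_⟩
  have := Finset.le_sup (f := fun i => (v i).toNat) (Finset.mem_univ i)
  omega

theorem jvec_le {k : ℕ} {N N' : ℕ} (h : N ≤ N') : jvecZ k N ≤ jvecZ k N' :=
  Pi.le_def.mpr fun _ => by show (N : ℤ) ≤ (N' : ℤ); omega

theorem neg_jvec_le {k : ℕ} {N N' : ℕ} (h : N ≤ N') : -(jvecZ k N') ≤ -(jvecZ k N) :=
  neg_le_neg (jvec_le h)

theorem exists_bigcyl_subset {U : Set (TwoSidedPath Λ)} (hU : IsOpen U)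
    {x : TwoSidedPath Λ} (hx : x ∈ U) :
    ∃ N : ℕ, ZCyl Λ (x.toFun (-(jvecZ k N)) (jvecZ k N) (neg_jvecZ_le k N)) (-(jvecZ k N)) ⊆ U := by
  have hU' : TopologicalSpace.GenerateOpen {S | ∃ lam n, S = ZCyl Λ lam n} U := hU
  clear hU
  induction hU' with
  | @basic S hS =>
    obtain ⟨lam, n0, rfl⟩ := hS
    obtain ⟨N, hN⟩ := exists_j (fun i => max (-(n0 i)) (n0 i + (Λ.deg lam i : ℤ)))
    have hm1 : -(jvecZ k N) ≤ n0 := Pi.le_def.mpr fun i => by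
      have := hN i; simp only [jvecZ, Pi.neg_apply]; omega
    have hm2 : n0 + Λ.degZ lam ≤ jvecZ k N := Pi.le_def.mpr fun i => by
      have := hN i
      show n0 i + (Λ.deg lam i : ℤ) ≤ (N : ℤ)
      omega
    refine ⟨N, fun z hz => ?_⟩
    have hzx : z.toFun n0 (n0 + Λ.degZ lam) (le_add_degZ Λ n0 lam) =
        x.toFun n0 (n0 + Λ.degZ lam) (le_add_degZ Λ n0 lam) :=
      sub_eq z x hm1 (le_add_degZ Λ n0 lam) hm2 (hm1.trans ((le_add_degZ Λ n0 lam).trans hm2))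
        ((mem_cyl_iff x z _ _ _).1 hz)
    exact hzx.trans hx
  | univ => exact ⟨0, fun z _ => trivial⟩
  | @inter S T hS hT ihS ihT =>
    obtain ⟨N1, h1⟩ := ihS hx.1
    obtain ⟨N2, h2⟩ := ihT hx.2
    refine ⟨max N1 N2, fun z hz => ?_⟩
    have e1 := cyl_sub x (neg_jvec_le (le_max_left N1 N2)) (neg_jvecZ_le k N1)
      (jvec_le (le_max_left N1 N2)) (neg_jvecZ_le k (max N1 N2)) hz
    have e2 := cyl_sub x (neg_jvec_le (le_max_right N1 N2)) (neg_jvecZ_le k N2)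
      (jvec_le (le_max_right N1 N2)) (neg_jvecZ_le k (max N1 N2)) hz
    exact ⟨h1 e1, h2 e2⟩
  | @sUnion S hS ih =>
    obtain ⟨t, ht, hxt⟩ := hx
    obtain ⟨N, hN⟩ := ih t ht hxt
    exact ⟨N, hN.trans (Set.subset_sUnion_of_mem ht)⟩

theorem exists_cyl_subset {U : Set (TwoSidedPath Λ)} (hU : IsOpen U)
    {x : TwoSidedPath Λ} (hx : x ∈ U) :
    ∃ lam n, x ∈ ZCyl Λ lam n ∧ ZCyl Λ lam n ⊆ U := by
  obtain ⟨N, hN⟩ := exists_bigcyl_subset hU hx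
  exact ⟨_, _, x.self_mem_cyl _ _ (neg_jvecZ_le k N), hN⟩

theorem isVertex_toFun (x : TwoSidedPath Λ) (m : Fin k → ℤ) :
    Λ.IsVertex (x.toFun m m le_rfl) := by
  funext i
  have := x.deg_eq m m le_rfl i
  simp only [Pi.zero_apply]
  omega

end PathLemmas
namespace Splice

variable {k : ℕ} {Λ : KGraph k}

def Lb (B : Fin k → ℤ) (j : ℕ) : Fin k → ℤ := B - jvecZ k j

def Rb (C : Fin k → ℤ) (j : ℕ) : Fin k → ℤ := C + jvecZ k j

theorem Lb_le (B : Fin k → ℤ) (j : ℕ) : Lb B j ≤ B :=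
  Pi.le_def.mpr fun i => by show B i - (j : ℤ) ≤ B i; omega

theorem le_Rb (C : Fin k → ℤ) (j : ℕ) : C ≤ Rb C j :=
  Pi.le_def.mpr fun i => by show C i ≤ C i + (j : ℤ); omega

theorem Lb_anti (B : Fin k → ℤ) {j j' : ℕ} (h : j ≤ j') : Lb B j' ≤ Lb B j :=
  Pi.le_def.mpr fun i => by show B i - (j' : ℤ) ≤ B i - (j : ℤ); omega

theorem Rb_mono (C : Fin k → ℤ) {j j' : ℕ} (h : j ≤ j') : Rb C j ≤ Rb C j' :=
  Pi.le_def.mpr fun i => by show C i + (j : ℤ) ≤ C i + (j' : ℤ); omega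

variable (y x' : TwoSidedPath Λ) (lam : Λ.Mor) (B C : Fin k → ℤ)

noncomputable def fJ (j : ℕ) : Λ.Mor :=
  Λ.cmp (y.toFun (Lb B j) B (Lb_le B j)) (Λ.cmp lam (x'.toFun C (Rb C j) (le_Rb C j)))

theorem srcY (hr : Λ.rng lam = y.toFun B B le_rfl) (j : ℕ) :
    Λ.src (y.toFun (Lb B j) B (Lb_le B j)) = Λ.rng lam :=
  (y.src_eq _ _ _).trans hr.symm

theorem srclamX (hs : Λ.src lam = x'.toFun C C le_rfl) (j : ℕ) :
    Λ.src lam = Λ.rng (x'.toFun C (Rb C j) (le_Rb C j)) :=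
  hs.trans (x'.rng_eq _ _ _).symm

theorem splits3_fJ (hr : Λ.rng lam = y.toFun B B le_rfl)
    (hs : Λ.src lam = x'.toFun C C le_rfl) (j : ℕ) :
    Λ.Splits3 (fJ y x' lam B C j) (y.toFun (Lb B j) B (Lb_le B j)) lam
      (x'.toFun C (Rb C j) (le_Rb C j)) :=
  ⟨srcY y lam B hr j, srclamX x' lam C hs j, rfl⟩

theorem rng_fJ (hr : Λ.rng lam = y.toFun B B le_rfl)
    (hs : Λ.src lam = x'.toFun C C le_rfl) (j : ℕ) :
    Λ.rng (fJ y x' lam B C j) = y.toFun (Lb B j) (Lb B j) le_rfl := by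
  rw [(splits3_fJ y x' lam B C hr hs j).rng_eq', y.rng_eq]

theorem fJ_nest (hr : Λ.rng lam = y.toFun B B le_rfl)
    (hs : Λ.src lam = x'.toFun C C le_rfl) {j j' : ℕ} (hj : j ≤ j') :
    Λ.Splits3 (fJ y x' lam B C j')
      (y.toFun (Lb B j') (Lb B j) (Lb_anti B hj)) (fJ y x' lam B C j)
      (x'.toFun (Rb C j) (Rb C j') (Rb_mono C hj)) := by
  have s0 := splits3_fJ y x' lam B C hr hs j'
  have hca : Λ.src (y.toFun (Lb B j') (Lb B j) (Lb_anti B hj)) =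
      Λ.rng (y.toFun (Lb B j) B (Lb_le B j)) :=
    (y.src_eq _ _ _).trans (y.rng_eq _ _ _).symm
  have hY : Λ.cmp (y.toFun (Lb B j') (Lb B j) (Lb_anti B hj))
      (y.toFun (Lb B j) B (Lb_le B j)) = y.toFun (Lb B j') B (Lb_le B j') :=
    cmp_toFun y _ _ _ _ _
  have s1 := KGraph.splits3_left_split s0 hca hY
  have hcx : Λ.src (x'.toFun C (Rb C j) (le_Rb C j)) =
      Λ.rng (x'.toFun (Rb C j) (Rb C j') (Rb_mono C hj)) :=
    (x'.src_eq _ _ _).trans (x'.rng_eq _ _ _).symm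
  have hX : Λ.cmp (x'.toFun C (Rb C j) (le_Rb C j))
      (x'.toFun (Rb C j) (Rb C j') (Rb_mono C hj)) = x'.toFun C (Rb C j') (le_Rb C j') :=
    cmp_toFun x' _ _ _ _ _
  have hXX : Λ.cmp (Λ.cmp lam (x'.toFun C (Rb C j) (le_Rb C j)))
      (x'.toFun (Rb C j) (Rb C j') (Rb_mono C hj)) =
      Λ.cmp lam (x'.toFun C (Rb C j') (le_Rb C j')) := by
    rw [KGraph.cmp_assoc (srclamX x' lam C hs j) hcx, hX]
  have hb : Λ.src (Λ.cmp lam (x'.toFun C (Rb C j) (le_Rb C j))) =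
      Λ.rng (x'.toFun (Rb C j) (Rb C j') (Rb_mono C hj)) :=
    (KGraph.src_cmp (srclamX x' lam C hs j)).trans hcx
  exact KGraph.splits3_absorb s1 hb hXX

def WAt (j : ℕ) (l m : Fin k → ℤ) (M : Λ.Mor) : Prop :=
  ∃ A B' : Λ.Mor, Lb B j ≤ l ∧ m ≤ Rb C j ∧
    Λ.Splits3 (fJ y x' lam B C j) A M B' ∧
    Λ.deg A = toNv (l - Lb B j) ∧ Λ.deg M = toNv (m - l)

def IsW (l m : Fin k → ℤ) (M : Λ.Mor) : Prop :=
  ∃ j : ℕ, WAt y x' lam B C j l m M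

theorem wAt_mono (hr : Λ.rng lam = y.toFun B B le_rfl)
    (hs : Λ.src lam = x'.toFun C C le_rfl) {j j' : ℕ} {l m : Fin k → ℤ} {M : Λ.Mor}
    (hj : j ≤ j') (h : WAt y x' lam B C j l m M) : WAt y x' lam B C j' l m M := by
  obtain ⟨A, B', hl, hm, s, dA, dM⟩ := h
  have nest := fJ_nest y x' lam B C hr hs hj
  have s' := KGraph.splits3_trans nest s
  refine ⟨_, _, (Lb_anti B hj).trans hl, hm.trans (Rb_mono C hj), s', ?_, dM⟩
  have hrA : Λ.rng A = y.toFun (Lb B j) (Lb B j) le_rfl :=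
    s.rng_eq'.symm.trans (rng_fJ y x' lam B C hr hs j)
  have hcomp : Λ.src (y.toFun (Lb B j') (Lb B j) (Lb_anti B hj)) = Λ.rng A :=
    (y.src_eq _ _ _).trans hrA.symm
  rw [KGraph.deg_cmp hcomp, dA, deg_toFun]
  funext i
  have h1 : Lb B j i ≤ l i := hl i
  simp only [toNv, Pi.add_apply, Pi.sub_apply, Lb, jvecZ] at h1 ⊢
  omega

theorem isW_unique (hr : Λ.rng lam = y.toFun B B le_rfl)
    (hs : Λ.src lam = x'.toFun C C le_rfl) {l m : Fin k → ℤ} {M1 M2 : Λ.Mor}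
    (h1 : IsW y x' lam B C l m M1) (h2 : IsW y x' lam B C l m M2) : M1 = M2 := by
  obtain ⟨j1, w1⟩ := h1
  obtain ⟨j2, w2⟩ := h2
  obtain ⟨A1, B1, hl1, hm1, s1, dA1, dM1⟩ :=
    wAt_mono y x' lam B C hr hs (le_max_left j1 j2) w1
  obtain ⟨A2, B2, hl2, hm2, s2, dA2, dM2⟩ :=
    wAt_mono y x' lam B C hr hs (le_max_right j1 j2) w2
  exact KGraph.splits3_unique s1 s2 (dA1.trans dA2.symm) (dM1.trans dM2.symm)

theorem deg_fJ (hr : Λ.rng lam = y.toFun B B le_rfl)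
    (hs : Λ.src lam = x'.toFun C C le_rfl) (hBC : B ≤ C)
    (hdeg : Λ.deg lam = toNv (C - B)) (j : ℕ) :
    Λ.deg (fJ y x' lam B C j) = toNv (Rb C j - Lb B j) := by
  have hc1 : Λ.src (y.toFun (Lb B j) B (Lb_le B j)) =
      Λ.rng (Λ.cmp lam (x'.toFun C (Rb C j) (le_Rb C j))) :=
    (srcY y lam B hr j).trans (KGraph.rng_cmp (srclamX x' lam C hs j)).symm
  show Λ.deg (Λ.cmp _ _) = _
  rw [KGraph.deg_cmp hc1, KGraph.deg_cmp (srclamX x' lam C hs j), deg_toFun, deg_toFun, hdeg]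
  funext i
  have hbc : B i ≤ C i := hBC i
  simp only [toNv, Pi.add_apply, Pi.sub_apply, Lb, Rb, jvecZ]
  omega

theorem isW_exists (hr : Λ.rng lam = y.toFun B B le_rfl)
    (hs : Λ.src lam = x'.toFun C C le_rfl) (hBC : B ≤ C)
    (hdeg : Λ.deg lam = toNv (C - B)) (l m : Fin k → ℤ) (h : l ≤ m) :
    ∃ M, IsW y x' lam B C l m M := by
  obtain ⟨j1, hj1⟩ := exists_j (B - l)
  obtain ⟨j2, hj2⟩ := exists_j (m - C)
  have hl : Lb B (j1 + j2) ≤ l := Pi.le_def.mpr fun i => by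
    have h1 := hj1 i
    simp only [Pi.sub_apply] at h1
    show B i - ((j1 + j2 : ℕ) : ℤ) ≤ l i
    omega
  have hm : m ≤ Rb C (j1 + j2) := Pi.le_def.mpr fun i => by
    have h1 := hj2 i
    simp only [Pi.sub_apply] at h1
    show m i ≤ C i + ((j1 + j2 : ℕ) : ℤ)
    omega
  have hdegsum : Λ.deg (fJ y x' lam B C (j1 + j2)) =
      toNv (l - Lb B (j1 + j2)) + (toNv (m - l) + toNv (Rb C (j1 + j2) - m)) := by
    rw [deg_fJ y x' lam B C hr hs hBC hdeg]
    funext i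
    have h1 : Lb B (j1 + j2) i ≤ l i := hl i
    have h2 : m i ≤ Rb C (j1 + j2) i := hm i
    have h3 : l i ≤ m i := h i
    simp only [toNv, Pi.add_apply, Pi.sub_apply, Lb, Rb, jvecZ] at h1 h2 ⊢
    omega
  obtain ⟨A, M, B', s, dA, dM, dB⟩ := KGraph.splits3_exists _ _ _ _ hdegsum
  exact ⟨M, j1 + j2, A, B', hl, hm, s, dA, dM⟩

end Splice
theorem splice {k : ℕ} {Λ : KGraph k} (y x' : TwoSidedPath Λ) (B C : Fin k → ℤ)
    (hBC : B ≤ C) (lam : Λ.Mor) (hdeg : Λ.deg lam = toNv (C - B))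
    (hr : Λ.rng lam = y.toFun B B le_rfl) (hs : Λ.src lam = x'.toFun C C le_rfl) :
    ∃ w : TwoSidedPath Λ,
      (∀ l (h : l ≤ B), w.toFun l B h = y.toFun l B h) ∧
      (∀ m (h : C ≤ m), w.toFun C m h = x'.toFun C m h) := by
  classical
  have ex : ∀ l m (h : l ≤ m), ∃ M, Splice.IsW y x' lam B C l m M :=
    fun l m h => Splice.isW_exists y x' lam B C hr hs hBC hdeg l m h
  set wf : ∀ l m : Fin k → ℤ, l ≤ m → Λ.Mor := fun l m h => (ex l m h).choose with hwfdef
  have hwf : ∀ l m (h : l ≤ m), Splice.IsW y x' lam B C l m (wf l m h) :=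
    fun l m h => (ex l m h).choose_spec
  refine ⟨⟨wf, ?_, ?_, ?_, ?_⟩, ?_, ?_⟩
  · -- deg_eq
    intro m n h i
    obtain ⟨j, A, B', hl, hm, s, dA, dM⟩ := hwf m n h
    have h1 := congrFun dM i
    simp only [toNv, Pi.sub_apply] at h1
    have h2 : m i ≤ n i := h i
    omega
  · -- src_eq
    intro m n h
    refine Splice.isW_unique y x' lam B C hr hs ?_ (hwf n n le_rfl)
    obtain ⟨j, A, B', hl, hm, s, dA, dM⟩ := hwf m n h
    have hc : Λ.src (wf m n h) = Λ.rng (Λ.src (wf m n h)) :=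
      (Λ.rng_obj _ (Λ.deg_src _)).symm
    have s2 := (KGraph.splits3_split s hc (KGraph.cmp_src_right _)).2
    refine ⟨j, _, _, hl.trans h, hm, s2, ?_, ?_⟩
    · rw [KGraph.deg_cmp s.1, dA, dM]
      funext i
      have h1 : Splice.Lb B j i ≤ m i := hl i
      have h2 : m i ≤ n i := h i
      simp only [toNv, Pi.add_apply, Pi.sub_apply]
      omega
    · rw [Λ.deg_src]
      funext i
      simp only [toNv, Pi.zero_apply, Pi.sub_apply]
      omega
  · -- rng_eq
    intro m n h
    refine Splice.isW_unique y x' lam B C hr hs ?_ (hwf m m le_rfl)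
    obtain ⟨j, A, B', hl, hm, s, dA, dM⟩ := hwf m n h
    have hc : Λ.src (Λ.rng (wf m n h)) = Λ.rng (wf m n h) :=
      Λ.src_obj _ (Λ.deg_rng _)
    have s2 := (KGraph.splits3_split s hc (KGraph.cmp_rng_left _)).1
    refine ⟨j, _, _, hl, h.trans hm, s2, dA, ?_⟩
    rw [Λ.deg_rng]
    funext i
    simp only [toNv, Pi.zero_apply, Pi.sub_apply]
    omega
  · -- comp_eq
    intro l m n h1 h2
    rw [← KGraph.cmp_def]
    refine Splice.isW_unique y x' lam B C hr hs ?_ (hwf l n (h1.trans h2))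
    obtain ⟨j1, w1⟩ := hwf l m h1
    obtain ⟨j2, w2⟩ := hwf m n h2
    obtain ⟨A1, B1, hl1, hm1, s1, dA1, dM1⟩ :=
      Splice.wAt_mono y x' lam B C hr hs (le_max_left j1 j2) w1
    obtain ⟨A2, B2, hl2, hm2, s2, dA2, dM2⟩ :=
      Splice.wAt_mono y x' lam B C hr hs (le_max_right j1 j2) w2
    have hdegsum : Λ.deg (Splice.fJ y x' lam B C (max j1 j2)) =
        toNv (l - Splice.Lb B (max j1 j2)) +
          (toNv (n - l) + toNv (Splice.Rb C (max j1 j2) - n)) := by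
      rw [Splice.deg_fJ y x' lam B C hr hs hBC hdeg]
      funext i
      have e1 : Splice.Lb B (max j1 j2) i ≤ l i := hl1 i
      have e2 : n i ≤ Splice.Rb C (max j1 j2) i := hm2 i
      have e3 : l i ≤ m i := h1 i
      have e4 : m i ≤ n i := h2 i
      simp only [toNv, Pi.add_apply, Pi.sub_apply] at e1 e2 ⊢
      omega
    obtain ⟨A, M, B', sM, dA, dM, dB⟩ := KGraph.splits3_exists _ _ _ _ hdegsum
    have hdM : Λ.deg M = toNv (m - l) + toNv (n - m) :=
      dM.trans (funext fun i => by
        have e3 : l i ≤ m i := h1 i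
        have e4 : m i ≤ n i := h2 i
        simp only [toNv, Pi.add_apply, Pi.sub_apply]
        omega)
    obtain ⟨⟨M1', M2'⟩, ⟨dM1', dM2', hsr, hcomp⟩, -⟩ := Λ.factor M _ _ hdM
    have hM : Λ.cmp M1' M2' = M := by rw [KGraph.cmp_def hsr]; exact hcomp
    have sleft := (KGraph.splits3_split sM hsr hM).1
    have sright := (KGraph.splits3_split sM hsr hM).2
    have e1 : M1' = wf l m h1 :=
      KGraph.splits3_unique sleft s1 (dA.trans dA1.symm) (dM1'.trans dM1.symm)
    have e2 : M2' = wf m n h2 := by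
      refine KGraph.splits3_unique sright s2 ?_ (dM2'.trans dM2.symm)
      rw [KGraph.deg_cmp sleft.1, dA, dM1', dA2]
      funext i
      have f1 : Splice.Lb B (max j1 j2) i ≤ l i := hl1 i
      have f2 : l i ≤ m i := h1 i
      simp only [toNv, Pi.add_apply, Pi.sub_apply] at f1 ⊢
      omega
    have hMM : M = Λ.cmp (wf l m h1) (wf m n h2) := by
      rw [← e1, ← e2]; exact hM.symm
    refine ⟨max j1 j2, A, B', hl1, hm2, ?_, dA, ?_⟩
    · rw [← hMM]; exact sM
    · rw [← hMM]; exact dM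
  · -- left agreement
    intro l h
    refine Splice.isW_unique y x' lam B C hr hs (hwf l B h) ?_
    obtain ⟨j, hj⟩ := exists_j (B - l)
    have hl : Splice.Lb B j ≤ l := Pi.le_def.mpr fun i => by
      have := hj i
      simp only [Pi.sub_apply] at this
      show B i - (j : ℤ) ≤ l i
      omega
    have s0 := Splice.splits3_fJ y x' lam B C hr hs j
    have hca : Λ.src (y.toFun (Splice.Lb B j) l hl) = Λ.rng (y.toFun l B h) :=
      (y.src_eq _ _ _).trans (y.rng_eq _ _ _).symm
    have hY : Λ.cmp (y.toFun (Splice.Lb B j) l hl) (y.toFun l B h) =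
        y.toFun (Splice.Lb B j) B (Splice.Lb_le B j) := cmp_toFun y _ _ _ _ _
    have s1 := KGraph.splits3_left_split s0 hca hY
    exact ⟨j, _, _, hl, hBC.trans (Splice.le_Rb C j), s1, deg_toFun y _ _ _, deg_toFun y _ _ _⟩
  · -- right agreement
    intro m h
    refine Splice.isW_unique y x' lam B C hr hs (hwf C m h) ?_
    obtain ⟨j, hj⟩ := exists_j (m - C)
    have hm : m ≤ Splice.Rb C j := Pi.le_def.mpr fun i => by
      have := hj i
      simp only [Pi.sub_apply] at this
      show m i ≤ C i + (j : ℤ)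
      omega
    have s0 := Splice.splits3_fJ y x' lam B C hr hs j
    have hcx : Λ.src (x'.toFun C m h) = Λ.rng (x'.toFun m (Splice.Rb C j) hm) :=
      (x'.src_eq _ _ _).trans (x'.rng_eq _ _ _).symm
    have hX : Λ.cmp (x'.toFun C m h) (x'.toFun m (Splice.Rb C j) hm) =
        x'.toFun C (Splice.Rb C j) (Splice.le_Rb C j) := cmp_toFun x' _ _ _ _ _
    have s1 := KGraph.splits3_right_split s0 hcx hX
    refine ⟨j, _, _, (Splice.Lb_le B j).trans hBC, hm, s1, ?_, deg_toFun x' _ _ _⟩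
    rw [KGraph.deg_cmp (Splice.srcY y lam B hr j), deg_toFun, hdeg]
    funext i
    have hbc : B i ≤ C i := hBC i
    simp only [toNv, Pi.add_apply, Pi.sub_apply, Splice.Lb, jvecZ]
    omega
/-- If `Λ` is primitive then the shift action on `Λ^Δ` is
topologically mixing. -/
theorem shift_topologically_mixing {k : ℕ} (hk : 0 < k) (Λ : KGraph k)
    (hstar : Λ.Star) (hprim : Λ.Primitive)
    (U V : Set (TwoSidedPath Λ)) (hU : IsOpen U) (hV : IsOpen V)
    (hUne : U.Nonempty) (hVne : V.Nonempty) :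
    ∃ Q : Fin k → ℤ, ∀ q : Fin k → ℤ, Q ≤ q →
      (U ∩ (TwoSidedPath.shift q) '' V).Nonempty := by
  classical
  obtain ⟨x, hxU⟩ := hUne
  obtain ⟨y, hyV⟩ := hVne
  obtain ⟨μU, mU, hxcyl, hUsub⟩ := exists_cyl_subset hU hxU
  obtain ⟨μV, mV, hycyl, hVsub⟩ := exists_cyl_subset hV hyV
  obtain ⟨p, hp0, hpconn⟩ := hprim
  refine ⟨(mV + Λ.degZ μV) - mU + coeZ p, fun q hq => ?_⟩
  set B : Fin k → ℤ := mV + Λ.degZ μV with hBdef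
  set C : Fin k → ℤ := fun i => q i + mU i with hCdef
  have hqi : ∀ i, B i + (p i : ℤ) ≤ C i := fun i => by
    have h1 := hq i
    simp only [Pi.add_apply, Pi.sub_apply, coeZ] at h1
    show B i + (p i : ℤ) ≤ q i + mU i
    omega
  have hBC : B ≤ C := Pi.le_def.mpr fun i => by
    have h1 := hqi i
    have h2 : (0 : ℤ) ≤ (p i : ℤ) := Int.natCast_nonneg _
    omega
  set x' : TwoSidedPath Λ := TwoSidedPath.shift (-q) x with hx'def
  have hvB : Λ.IsVertex (y.toFun B B le_rfl) := isVertex_toFun y B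
  have hu0 : Λ.IsVertex (x'.toFun C C le_rfl) := isVertex_toFun x' C
  obtain ⟨lam1, hd1, hs1⟩ :=
    ((hstar (fun i => (C i - B i).toNat - p i)).1 _ hu0).2
  obtain ⟨nu, hdnu, hrnu, hsnu⟩ :=
    hpconn (y.toFun B B le_rfl) (Λ.rng lam1) hvB (Λ.deg_rng lam1)
  have hcmp : Λ.src nu = Λ.rng lam1 := hsnu
  have hdlamc : Λ.deg (Λ.comp nu lam1 hcmp) = toNv (C - B) := by
    rw [Λ.deg_comp, hdnu, hd1]
    funext i
    have h1 := hqi i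
    simp only [toNv, Pi.add_apply, Pi.sub_apply]
    omega
  have hrlamc : Λ.rng (Λ.comp nu lam1 hcmp) = y.toFun B B le_rfl := by
    rw [Λ.rng_comp]; exact hrnu
  have hslamc : Λ.src (Λ.comp nu lam1 hcmp) = x'.toFun C C le_rfl := by
    rw [Λ.src_comp]; exact hs1
  obtain ⟨w, hwl, hwr⟩ := splice y x' B C hBC _ hdlamc hrlamc hslamc
  have hB' : mV ≤ B := by rw [hBdef]; exact le_add_degZ Λ mV μV
  have hwV : w ∈ V := by
    apply hVsub
    show w.toFun mV (mV + Λ.degZ μV) (le_add_degZ Λ mV μV) = μV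
    have e0 : w.toFun mV (mV + Λ.degZ μV) (le_add_degZ Λ mV μV) = w.toFun mV B hB' :=
      w.toFun_congr rfl hBdef.symm _ _
    have e1 : y.toFun mV B hB' = y.toFun mV (mV + Λ.degZ μV) (le_add_degZ Λ mV μV) :=
      y.toFun_congr rfl hBdef _ _
    exact e0.trans ((hwl mV hB').trans (e1.trans hycyl))
  have hCle : C ≤ C + Λ.degZ μU := le_add_degZ Λ C μU
  have hsU : TwoSidedPath.shift q w ∈ U := by
    apply hUsub
    show (TwoSidedPath.shift q w).toFun mU (mU + Λ.degZ μU) (le_add_degZ Λ mU μU) = μU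
    show w.toFun (mU + q) (mU + Λ.degZ μU + q) _ = μU
    have e1 : mU + q = C := funext fun i => by
      show mU i + q i = q i + mU i; omega
    have e2 : mU + Λ.degZ μU + q = C + Λ.degZ μU := funext fun i => by
      show mU i + Λ.degZ μU i + q i = (q i + mU i) + Λ.degZ μU i; omega
    have e3 : C + -q = mU := funext fun i => by
      show (q i + mU i) + -q i = mU i; omega
    have e4 : C + Λ.degZ μU + -q = mU + Λ.degZ μU := funext fun i => by
      show (q i + mU i) + Λ.degZ μU i + -q i = mU i + Λ.degZ μU i; omega
    have hx'eq : x'.toFun C (C + Λ.degZ μU) hCle = μU := by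
      show x.toFun (C + -q) (C + Λ.degZ μU + -q) _ = μU
      exact (x.toFun_congr e3 e4 _ (le_add_degZ Λ mU μU)).trans hxcyl
    exact (w.toFun_congr e1 e2 _ hCle).trans ((hwr _ hCle).trans hx'eq)
  exact ⟨TwoSidedPath.shift q w, hsU, w, hwV, rfl⟩
end

section
/- Let (Λ,d) be a k-graph satisfying the standing assumption (★). For all x,y ∈ Λ^Δ with x(0) = y(0) there exists a unique element z ∈ Λ^Δ such that z(m,n) = x(m,n) whenever m ≤ n ≤ 0 and z(m,n) = y(m,n) whenever 0 ≤ m ≤ n; moreover F_x ∩ E_y = {z}. -/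
open scoped Classical
open TopologicalSpace MeasureTheory

namespace BracketAux

variable {k : ℕ} {Λ : KGraph k}

/-- Nonnegative difference of two integer vectors, as a vector of naturals. -/
def pdeg (m n : Fin k → ℤ) : Fin k → ℕ := fun i => (n i - m i).toNat

theorem deg_toFun (x : TwoSidedPath Λ) (m n : Fin k → ℤ) (h : m ≤ n) :
    Λ.deg (x.toFun m n h) = pdeg m n := by
  funext i
  have h' := x.deg_eq m n h i
  simp only [pdeg]
  omega

theorem compat (x y : TwoSidedPath Λ) {l m m' n : Fin k → ℤ} (h1 : l ≤ m) (h2 : m' ≤ n)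
    (hm : x.toFun m m le_rfl = y.toFun m' m' le_rfl) :
    Λ.src (x.toFun l m h1) = Λ.rng (y.toFun m' n h2) :=
  (x.src_eq l m h1).trans (hm.trans (y.rng_eq m' n h2).symm)

theorem comp_congr {a a' b b' : Λ.Mor} (ha : a = a') (hb : b = b')
    (h : Λ.src a = Λ.rng b) (h' : Λ.src a' = Λ.rng b') :
    Λ.comp a b h = Λ.comp a' b' h' := by subst ha; subst hb; rfl

theorem uniq_fac {a b a' b' : Λ.Mor} (ha : Λ.deg a' = Λ.deg a) (hb : Λ.deg b' = Λ.deg b)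
    (h : Λ.src a = Λ.rng b) (h' : Λ.src a' = Λ.rng b')
    (e : Λ.comp a' b' h' = Λ.comp a b h) : a' = a ∧ b' = b := by
  have E := Λ.factor (Λ.comp a b h) (Λ.deg a) (Λ.deg b) (Λ.deg_comp a b h)
  have h12 := E.unique (y₁ := (a', b')) (y₂ := (a, b)) ⟨ha, hb, h', e⟩ ⟨rfl, rfl, h, rfl⟩
  exact ⟨congrArg Prod.fst h12, congrArg Prod.snd h12⟩

theorem tsp_ext {x y : TwoSidedPath Λ}
    (h : ∀ m n (hh : m ≤ n), x.toFun m n hh = y.toFun m n hh) : x = y := by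
  cases x; cases y
  simp only [TwoSidedPath.mk.injEq]
  funext m n hh
  exact h m n hh

variable (x y : TwoSidedPath Λ) (h0 : x.obj0 = y.obj0)

/-- The morphism `x(m∧0, 0) · y(0, n∨0)`. -/
def W (m n : Fin k → ℤ) : Λ.Mor :=
  Λ.comp (x.toFun (m ⊓ 0) 0 inf_le_right) (y.toFun 0 (n ⊔ 0) le_sup_right)
    (compat x y inf_le_right le_sup_right h0)

/-- `g` is the middle factor of `W m n` with degrees `(m - m∧0, n - m, n∨0 - n)`. -/
def MidFac (m n : Fin k → ℤ) (g : Λ.Mor) : Prop :=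
  Λ.deg g = pdeg m n ∧ ∃ (a c : Λ.Mor) (hgc : Λ.src g = Λ.rng c)
    (hagc : Λ.src a = Λ.rng (Λ.comp g c hgc)),
    Λ.deg a = pdeg (m ⊓ 0) m ∧ Λ.deg c = pdeg n (n ⊔ 0) ∧
    Λ.comp a (Λ.comp g c hgc) hagc = W x y h0 m n

theorem pdeg_add {m n p : Fin k → ℤ} (h1 : m ≤ n) (h2 : n ≤ p) :
    pdeg m p = pdeg m n + pdeg n p := by
  funext i
  have e1 : m i ≤ n i := h1 i
  have e2 : n i ≤ p i := h2 i
  simp only [pdeg, Pi.add_apply]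
  omega

theorem midfac_exu (m n : Fin k → ℤ) (h : m ≤ n) : ∃! g, MidFac x y h0 m n g := by
  have hdW : Λ.deg (W x y h0 m n) = pdeg (m ⊓ 0) m + pdeg m (n ⊔ 0) := by
    show Λ.deg (Λ.comp _ _ _) = _
    rw [Λ.deg_comp, deg_toFun, deg_toFun]
    funext i
    have e1 : m i ≤ n i := h i
    simp only [pdeg, Pi.add_apply, Pi.inf_apply, Pi.sup_apply, Pi.zero_apply]
    omega
  obtain ⟨⟨a, b⟩, ⟨hda, hdb, hab, he⟩, hu1⟩ :=
    Λ.factor (W x y h0 m n) (pdeg (m ⊓ 0) m) (pdeg m (n ⊔ 0)) hdW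
  have hdb' : Λ.deg b = pdeg m n + pdeg n (n ⊔ 0) :=
    hdb.trans (pdeg_add h le_sup_left)
  obtain ⟨⟨g, c⟩, ⟨hdg, hdc, hgc, he2⟩, hu2⟩ :=
    Λ.factor b (pdeg m n) (pdeg n (n ⊔ 0)) hdb'
  refine ⟨g, ⟨hdg, a, c, hgc, he2 ▸ hab, hda, hdc, (comp_congr rfl he2 _ hab).trans he⟩, ?_⟩
  rintro g' ⟨hdg', a', c', hgc', hagc', hda', hdc', he'⟩
  have hstep1 : (a', Λ.comp g' c' hgc') = (a, b) := by
    refine hu1 _ ⟨hda', ?_, hagc', he'⟩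
    show Λ.deg (Λ.comp g' c' hgc') = _
    rw [Λ.deg_comp, hdg', hdc', ← pdeg_add h le_sup_left]
  have hb' : Λ.comp g' c' hgc' = b := congrArg Prod.snd hstep1
  have hstep2 : (g', c') = (g, c) := hu2 _ ⟨hdg', hdc', hgc', hb'⟩
  exact congrArg Prod.fst hstep2

noncomputable def zfun (m n : Fin k → ℤ) (h : m ≤ n) : Λ.Mor :=
  (midfac_exu x y h0 m n h).exists.choose

theorem zfun_spec (m n : Fin k → ℤ) (h : m ≤ n) :
    MidFac x y h0 m n (zfun x y h0 m n h) :=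
  (midfac_exu x y h0 m n h).exists.choose_spec

theorem zfun_eq {m n : Fin k → ℤ} {g : Λ.Mor} (h : m ≤ n)
    (hg : MidFac x y h0 m n g) : zfun x y h0 m n h = g :=
  ((midfac_exu x y h0 m n h).unique (zfun_spec x y h0 m n h) hg)

theorem midfac_comp {l m n : Fin k → ℤ} (h1 : l ≤ m) (h2 : m ≤ n) {zl zm : Λ.Mor}
    (H1 : MidFac x y h0 l m zl) (H2 : MidFac x y h0 m n zm) :
    ∃ hc : Λ.src zl = Λ.rng zm, MidFac x y h0 l n (Λ.comp zl zm hc) := by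
  obtain ⟨hdlm, a₁, c₁, hc1, hc1', hda₁, hdc₁, he₁⟩ := H1
  obtain ⟨hdmn, a₂, c₂, hc2, hc2', hda₂, hdc₂, he₂⟩ := H2
  have hlm0 : l ⊓ 0 ≤ m ⊓ 0 := inf_le_inf h1 le_rfl
  have hmn0 : m ⊔ 0 ≤ n ⊔ 0 := sup_le_sup h2 le_rfl
  -- abbreviations
  -- X = x(l∧0, m∧0), Y = y(m∨0, n∨0), xm = x(m∧0,0), yn = y(0,n∨0),
  -- xl = x(l∧0,0), ym = y(0,m∨0)
  have hXxm : Λ.src (x.toFun (l ⊓ 0) (m ⊓ 0) hlm0)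
      = Λ.rng (x.toFun (m ⊓ 0) 0 inf_le_right) := compat x x hlm0 inf_le_right rfl
  have hxmyn : Λ.src (x.toFun (m ⊓ 0) 0 inf_le_right)
      = Λ.rng (y.toFun 0 (n ⊔ 0) le_sup_right) :=
    compat x y inf_le_right le_sup_right h0
  have hXW : Λ.src (x.toFun (l ⊓ 0) (m ⊓ 0) hlm0) = Λ.rng (W x y h0 m n) := by
    show _ = Λ.rng (Λ.comp _ _ _)
    rw [Λ.rng_comp]; exact hXxm
  have h3A : Λ.src (Λ.comp _ _ hXxm) = Λ.rng (y.toFun 0 (n ⊔ 0) le_sup_right) := by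
    rw [Λ.src_comp]; exact hxmyn
  -- Step A : X · W m n = W l n
  have hA : Λ.comp (x.toFun (l ⊓ 0) (m ⊓ 0) hlm0) (W x y h0 m n) hXW = W x y h0 l n := by
    have e1 : Λ.comp (x.toFun (l ⊓ 0) (m ⊓ 0) hlm0) (x.toFun (m ⊓ 0) 0 inf_le_right) hXxm
        = x.toFun (l ⊓ 0) 0 inf_le_right := x.comp_eq (l ⊓ 0) (m ⊓ 0) 0 hlm0 inf_le_right
    have e2 := Λ.assoc (x.toFun (l ⊓ 0) (m ⊓ 0) hlm0) (x.toFun (m ⊓ 0) 0 inf_le_right)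
      (y.toFun 0 (n ⊔ 0) le_sup_right) hXxm hxmyn h3A hXW
    calc Λ.comp (x.toFun (l ⊓ 0) (m ⊓ 0) hlm0) (W x y h0 m n) hXW
        = Λ.comp (Λ.comp _ _ hXxm) (y.toFun 0 (n ⊔ 0) le_sup_right) h3A := e2.symm
      _ = Λ.comp (x.toFun (l ⊓ 0) 0 inf_le_right) (y.toFun 0 (n ⊔ 0) le_sup_right)
            (compat x y inf_le_right le_sup_right h0) := comp_congr e1 rfl _ _
      _ = W x y h0 l n := rfl
  -- Step B : W l m · Y = W l n
  have hymY : Λ.src (y.toFun 0 (m ⊔ 0) le_sup_right)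
      = Λ.rng (y.toFun (m ⊔ 0) (n ⊔ 0) hmn0) := compat y y le_sup_right hmn0 rfl
  have hxlym : Λ.src (x.toFun (l ⊓ 0) 0 inf_le_right)
      = Λ.rng (y.toFun 0 (m ⊔ 0) le_sup_right) :=
    compat x y inf_le_right le_sup_right h0
  have hWY : Λ.src (W x y h0 l m) = Λ.rng (y.toFun (m ⊔ 0) (n ⊔ 0) hmn0) := by
    show Λ.src (Λ.comp _ _ _) = _
    rw [Λ.src_comp]; exact hymY
  have hB : Λ.comp (W x y h0 l m) (y.toFun (m ⊔ 0) (n ⊔ 0) hmn0) hWY = W x y h0 l n := by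
    have e1 : Λ.comp (y.toFun 0 (m ⊔ 0) le_sup_right) (y.toFun (m ⊔ 0) (n ⊔ 0) hmn0) hymY
        = y.toFun 0 (n ⊔ 0) le_sup_right := y.comp_eq 0 (m ⊔ 0) (n ⊔ 0) le_sup_right hmn0
    have h4B : Λ.src (x.toFun (l ⊓ 0) 0 inf_le_right)
        = Λ.rng (Λ.comp _ _ hymY) := hxlym.trans (Λ.rng_comp _ _ hymY).symm
    have e2 := Λ.assoc (x.toFun (l ⊓ 0) 0 inf_le_right) (y.toFun 0 (m ⊔ 0) le_sup_right)
      (y.toFun (m ⊔ 0) (n ⊔ 0) hmn0) hxlym hymY hWY h4B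
    calc Λ.comp (W x y h0 l m) (y.toFun (m ⊔ 0) (n ⊔ 0) hmn0) hWY
        = Λ.comp (x.toFun (l ⊓ 0) 0 inf_le_right) (Λ.comp _ _ hymY) h4B := e2
      _ = Λ.comp (x.toFun (l ⊓ 0) 0 inf_le_right) (y.toFun 0 (n ⊔ 0) le_sup_right)
            (compat x y inf_le_right le_sup_right h0) := comp_congr rfl e1 _ _
      _ = W x y h0 l n := rfl
  -- Expr1 : X · (a₂ · (zm · c₂)) = W l n
  have hXa₂ : Λ.src (x.toFun (l ⊓ 0) (m ⊓ 0) hlm0) = Λ.rng a₂ :=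
    hXW.trans (by rw [← he₂, Λ.rng_comp])
  have hXcomp : Λ.src (x.toFun (l ⊓ 0) (m ⊓ 0) hlm0)
      = Λ.rng (Λ.comp a₂ (Λ.comp zm c₂ hc2) hc2') := by rw [Λ.rng_comp]; exact hXa₂
  have E1 : Λ.comp (x.toFun (l ⊓ 0) (m ⊓ 0) hlm0)
      (Λ.comp a₂ (Λ.comp zm c₂ hc2) hc2') hXcomp = W x y h0 l n :=
    (comp_congr rfl he₂ hXcomp hXW).trans hA
  -- factor X·a₂ into degrees (pdeg (l⊓0) l, pdeg l m)
  have hdXa₂ : Λ.deg (Λ.comp (x.toFun (l ⊓ 0) (m ⊓ 0) hlm0) a₂ hXa₂)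
      = pdeg (l ⊓ 0) l + pdeg l m := by
    rw [Λ.deg_comp, deg_toFun, hda₂]
    funext i
    have e1 : l i ≤ m i := h1 i
    simp only [pdeg, Pi.add_apply, Pi.inf_apply, Pi.zero_apply]
    omega
  obtain ⟨⟨A₀, u⟩, ⟨hdA₀, hdu, hAu, heAu⟩, -⟩ :=
    Λ.factor (Λ.comp (x.toFun (l ⊓ 0) (m ⊓ 0) hlm0) a₂ hXa₂) _ _ hdXa₂
  -- regroup Expr1 as (X·a₂)·(zm·c₂), then as A₀·(u·(zm·c₂))
  have hXa₂T : Λ.src (Λ.comp (x.toFun (l ⊓ 0) (m ⊓ 0) hlm0) a₂ hXa₂)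
      = Λ.rng (Λ.comp zm c₂ hc2) := by rw [Λ.src_comp]; exact hc2'
  have E1' : Λ.comp (Λ.comp (x.toFun (l ⊓ 0) (m ⊓ 0) hlm0) a₂ hXa₂)
      (Λ.comp zm c₂ hc2) hXa₂T = W x y h0 l n :=
    (Λ.assoc _ a₂ _ hXa₂ hc2' hXa₂T hXcomp).trans E1
  have hAuT : Λ.src (Λ.comp A₀ u hAu) = Λ.rng (Λ.comp zm c₂ hc2) := by
    rw [heAu]; exact hXa₂T
  have E1'' : Λ.comp (Λ.comp A₀ u hAu) (Λ.comp zm c₂ hc2) hAuT = W x y h0 l n :=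
    (comp_congr heAu rfl hAuT hXa₂T).trans E1'
  have huT : Λ.src u = Λ.rng (Λ.comp zm c₂ hc2) :=
    (Λ.src_comp A₀ u hAu).symm.trans hAuT
  have hA₀uT : Λ.src A₀ = Λ.rng (Λ.comp u (Λ.comp zm c₂ hc2) huT) := by
    rw [Λ.rng_comp]; exact hAu
  have E1''' : Λ.comp A₀ (Λ.comp u (Λ.comp zm c₂ hc2) huT) hA₀uT = W x y h0 l n :=
    (Λ.assoc A₀ u _ hAu huT hAuT hA₀uT).symm.trans E1''
  -- Expr2 : (a₁ · (zl·c₁)) · Y = W l n, regrouped to a₁ · (zl · (c₁·Y))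
  have hSY : Λ.src (Λ.comp a₁ (Λ.comp zl c₁ hc1) hc1')
      = Λ.rng (y.toFun (m ⊔ 0) (n ⊔ 0) hmn0) := by rw [he₁]; exact hWY
  have E2 : Λ.comp (Λ.comp a₁ (Λ.comp zl c₁ hc1) hc1')
      (y.toFun (m ⊔ 0) (n ⊔ 0) hmn0) hSY = W x y h0 l n :=
    (comp_congr he₁ rfl hSY hWY).trans hB
  have hSY' : Λ.src (Λ.comp zl c₁ hc1) = Λ.rng (y.toFun (m ⊔ 0) (n ⊔ 0) hmn0) :=
    (Λ.src_comp a₁ _ hc1').symm.trans hSY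
  have ha₁SY : Λ.src a₁ = Λ.rng (Λ.comp (Λ.comp zl c₁ hc1)
      (y.toFun (m ⊔ 0) (n ⊔ 0) hmn0) hSY') := by rw [Λ.rng_comp]; exact hc1'
  have E2' : Λ.comp a₁ (Λ.comp (Λ.comp zl c₁ hc1)
      (y.toFun (m ⊔ 0) (n ⊔ 0) hmn0) hSY') ha₁SY = W x y h0 l n :=
    (Λ.assoc a₁ _ _ hc1' hSY' hSY ha₁SY).symm.trans E2
  have hc₁Y : Λ.src c₁ = Λ.rng (y.toFun (m ⊔ 0) (n ⊔ 0) hmn0) :=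
    (Λ.src_comp zl c₁ hc1).symm.trans hSY'
  have hzlc₁Y : Λ.src zl = Λ.rng (Λ.comp c₁ (y.toFun (m ⊔ 0) (n ⊔ 0) hmn0) hc₁Y) := by
    rw [Λ.rng_comp]; exact hc1
  have ha₁zl : Λ.src a₁ = Λ.rng zl := hc1'.trans (Λ.rng_comp zl c₁ hc1)
  have ha₁in : Λ.src a₁
      = Λ.rng (Λ.comp zl (Λ.comp c₁ (y.toFun (m ⊔ 0) (n ⊔ 0) hmn0) hc₁Y) hzlc₁Y) := by
    rw [Λ.rng_comp]; exact ha₁zl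
  have eS : Λ.comp (Λ.comp zl c₁ hc1) (y.toFun (m ⊔ 0) (n ⊔ 0) hmn0) hSY'
      = Λ.comp zl (Λ.comp c₁ (y.toFun (m ⊔ 0) (n ⊔ 0) hmn0) hc₁Y) hzlc₁Y :=
    Λ.assoc zl c₁ _ hc1 hc₁Y hSY' hzlc₁Y
  have E2'' : Λ.comp a₁ (Λ.comp zl (Λ.comp c₁ (y.toFun (m ⊔ 0) (n ⊔ 0) hmn0) hc₁Y)
      hzlc₁Y) ha₁in = W x y h0 l n :=
    (comp_congr rfl eS.symm ha₁in ha₁SY).trans E2'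
  -- factor c₁ · Y into degrees (pdeg m n, pdeg n (n⊔0))
  have hdc₁Y : Λ.deg (Λ.comp c₁ (y.toFun (m ⊔ 0) (n ⊔ 0) hmn0) hc₁Y)
      = pdeg m n + pdeg n (n ⊔ 0) := by
    rw [Λ.deg_comp, hdc₁, deg_toFun]
    funext i
    have e1 : m i ≤ n i := h2 i
    simp only [pdeg, Pi.add_apply, Pi.sup_apply, Pi.zero_apply]
    omega
  obtain ⟨⟨v, C₀⟩, ⟨hdv, hdC₀, hvC, hevC⟩, -⟩ :=
    Λ.factor (Λ.comp c₁ (y.toFun (m ⊔ 0) (n ⊔ 0) hmn0) hc₁Y) _ _ hdc₁Y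
  have hzlvC : Λ.src zl = Λ.rng (Λ.comp v C₀ hvC) := by rw [hevC]; exact hzlc₁Y
  have ha₁in2 : Λ.src a₁ = Λ.rng (Λ.comp zl (Λ.comp v C₀ hvC) hzlvC) := by
    rw [Λ.rng_comp]; exact ha₁zl
  have e_in : Λ.comp zl (Λ.comp v C₀ hvC) hzlvC
      = Λ.comp zl (Λ.comp c₁ (y.toFun (m ⊔ 0) (n ⊔ 0) hmn0) hc₁Y) hzlc₁Y :=
    comp_congr rfl hevC hzlvC hzlc₁Y
  have E2''' : Λ.comp a₁ (Λ.comp zl (Λ.comp v C₀ hvC) hzlvC) ha₁in2 = W x y h0 l n :=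
    (comp_congr rfl e_in ha₁in2 ha₁in).trans E2''
  -- compare the two fourfold factorisations
  obtain ⟨eA, eB⟩ := uniq_fac (a := a₁) (b := Λ.comp zl (Λ.comp v C₀ hvC) hzlvC)
    (a' := A₀) (b' := Λ.comp u (Λ.comp zm c₂ hc2) huT)
    (hdA₀.trans hda₁.symm)
    (by simp only [Λ.deg_comp, hdu, hdmn, hdc₂, hdlm, hdv, hdC₀])
    ha₁in2 hA₀uT (E1'''.trans E2'''.symm)
  obtain ⟨eu, eT⟩ := uniq_fac (a := zl) (b := Λ.comp v C₀ hvC)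
    (a' := u) (b' := Λ.comp zm c₂ hc2)
    (hdu.trans hdlm.symm)
    (by simp only [Λ.deg_comp, hdmn, hdc₂, hdv, hdC₀])
    hzlvC huT eB
  have hc : Λ.src zl = Λ.rng zm := eu ▸ (huT.trans (Λ.rng_comp zm c₂ hc2))
  refine ⟨hc, ?_, a₁, c₂, ?_, ?_, hda₁, hdc₂, ?_⟩
  · rw [Λ.deg_comp, hdlm, hdmn, ← pdeg_add h1 h2]
  case refine_2 => rw [Λ.src_comp]; exact hc2
  case refine_3 => rw [Λ.rng_comp, Λ.rng_comp]; exact ha₁zl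
  case refine_4 =>
    have hzlin : Λ.src zl = Λ.rng (Λ.comp zm c₂ hc2) := by rw [Λ.rng_comp]; exact hc
    have e_in2 : Λ.comp (Λ.comp zl zm hc) c₂ (by rw [Λ.src_comp]; exact hc2)
        = Λ.comp zl (Λ.comp v C₀ hvC) hzlvC :=
      (Λ.assoc zl zm c₂ hc hc2 (by rw [Λ.src_comp]; exact hc2) hzlin).trans
        (comp_congr rfl eT hzlin hzlvC)
    exact (comp_congr rfl e_in2 _ ha₁in2).trans E2'''
theorem zfun_comp (l m n : Fin k → ℤ) (h1 : l ≤ m) (h2 : m ≤ n) :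
    ∃ hc : Λ.src (zfun x y h0 l m h1) = Λ.rng (zfun x y h0 m n h2),
      Λ.comp (zfun x y h0 l m h1) (zfun x y h0 m n h2) hc
        = zfun x y h0 l n (h1.trans h2) := by
  obtain ⟨hc, hmf⟩ := midfac_comp x y h0 h1 h2 (zfun_spec x y h0 l m h1)
    (zfun_spec x y h0 m n h2)
  exact ⟨hc, (zfun_eq x y h0 (h1.trans h2) hmf).symm⟩

theorem pdeg_self (n : Fin k → ℤ) : pdeg n n = 0 := by
  funext i; simp [pdeg]

/-- The glued two-sided path. -/
noncomputable def zpath : TwoSidedPath Λ where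
  toFun := zfun x y h0
  deg_eq m n h i := by
    have hd := congrFun (zfun_spec x y h0 m n h).1 i
    have e1 : m i ≤ n i := h i
    simp only [pdeg] at hd
    omega
  src_eq m n h := by
    obtain ⟨hc, he⟩ := zfun_comp x y h0 m n n h le_rfl
    have pf : Λ.src (zfun x y h0 m n h) = Λ.rng (Λ.src (zfun x y h0 m n h)) :=
      (Λ.rng_obj _ (Λ.deg_src _)).symm
    have e2 : Λ.comp (zfun x y h0 m n h) (Λ.src (zfun x y h0 m n h)) pf
        = zfun x y h0 m n h := Λ.comp_id _ pf
    have hdb : Λ.deg (zfun x y h0 n n le_rfl) = Λ.deg (Λ.src (zfun x y h0 m n h)) := by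
      rw [(zfun_spec x y h0 n n le_rfl).1, Λ.deg_src, pdeg_self]
    obtain ⟨-, e3⟩ := uniq_fac (a := zfun x y h0 m n h)
      (b := Λ.src (zfun x y h0 m n h)) (a' := zfun x y h0 m n h)
      (b' := zfun x y h0 n n le_rfl) rfl hdb pf hc (he.trans e2.symm)
    exact e3.symm
  rng_eq m n h := by
    obtain ⟨hc, he⟩ := zfun_comp x y h0 m m n le_rfl h
    have pf : Λ.src (Λ.rng (zfun x y h0 m n h)) = Λ.rng (zfun x y h0 m n h) :=
      Λ.src_obj _ (Λ.deg_rng _)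
    have e2 : Λ.comp (Λ.rng (zfun x y h0 m n h)) (zfun x y h0 m n h) pf
        = zfun x y h0 m n h := Λ.id_comp _ pf
    have hda : Λ.deg (zfun x y h0 m m le_rfl) = Λ.deg (Λ.rng (zfun x y h0 m n h)) := by
      rw [(zfun_spec x y h0 m m le_rfl).1, Λ.deg_rng, pdeg_self]
    obtain ⟨e3, -⟩ := uniq_fac (a := Λ.rng (zfun x y h0 m n h))
      (b := zfun x y h0 m n h) (a' := zfun x y h0 m m le_rfl)
      (b' := zfun x y h0 m n h) hda rfl pf hc (he.trans e2.symm)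
    exact e3.symm
  comp_eq l m n h1 h2 := by
    obtain ⟨hc, he⟩ := zfun_comp x y h0 l m n h1 h2
    exact he

theorem zfun_neg (m n : Fin k → ℤ) (h : m ≤ n) (hn : n ≤ 0) :
    zfun x y h0 m n h = x.toFun m n h := by
  apply zfun_eq
  have hm0 : m ⊓ 0 = m := inf_eq_left.mpr (h.trans hn)
  have hn0 : n ⊔ 0 = 0 := sup_eq_right.mpr hn
  have hgc : Λ.src (x.toFun m n h) = Λ.rng (x.toFun n 0 hn) := compat x x h hn rfl
  have hagc : Λ.src (x.toFun m m le_rfl)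
      = Λ.rng (Λ.comp (x.toFun m n h) (x.toFun n 0 hn) hgc) := by
    rw [Λ.rng_comp]; exact compat x x le_rfl h rfl
  refine ⟨deg_toFun x m n h, x.toFun m m le_rfl, x.toFun n 0 hn, hgc, hagc, ?_, ?_, ?_⟩
  · rw [deg_toFun]
    funext i
    have e1 : m i ≤ n i := h i
    have e2 : n i ≤ 0 := hn i
    simp only [pdeg, Pi.inf_apply, Pi.zero_apply]
    omega
  · rw [deg_toFun]
    funext i
    have e2 : n i ≤ 0 := hn i
    simp only [pdeg, Pi.sup_apply, Pi.zero_apply]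
    omega
  · have e1 : Λ.comp (x.toFun m n h) (x.toFun n 0 hn) hgc = x.toFun m 0 (h.trans hn) :=
      x.comp_eq m n 0 h hn
    have pfr : Λ.src (x.toFun m m le_rfl) = Λ.rng (x.toFun m 0 (h.trans hn)) :=
      compat x x le_rfl (h.trans hn) rfl
    have pf2 : Λ.src (Λ.rng (x.toFun m 0 (h.trans hn)))
        = Λ.rng (x.toFun m 0 (h.trans hn)) := Λ.src_obj _ (Λ.deg_rng _)
    have eL : Λ.comp (x.toFun m m le_rfl)
        (Λ.comp (x.toFun m n h) (x.toFun n 0 hn) hgc) hagc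
        = x.toFun m 0 (h.trans hn) :=
      ((comp_congr rfl e1 hagc pfr).trans
        (comp_congr (x.rng_eq m 0 (h.trans hn)).symm rfl pfr pf2)).trans (Λ.id_comp _ pf2)
    have pf : Λ.src (x.toFun (m ⊓ 0) 0 inf_le_right)
        = Λ.rng (Λ.src (x.toFun (m ⊓ 0) 0 inf_le_right)) :=
      (Λ.rng_obj _ (Λ.deg_src _)).symm
    have eY : y.toFun 0 (n ⊔ 0) le_sup_right = Λ.src (x.toFun (m ⊓ 0) 0 inf_le_right) :=
      (y.toFun_congr rfl hn0 le_sup_right le_rfl).trans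
        (h0.symm.trans (x.src_eq (m ⊓ 0) 0 inf_le_right).symm)
    have eR : W x y h0 m n = x.toFun m 0 (h.trans hn) :=
      ((comp_congr rfl eY (compat x y inf_le_right le_sup_right h0) pf).trans
        (Λ.comp_id _ pf)).trans (x.toFun_congr hm0 rfl inf_le_right (h.trans hn))
    exact eL.trans eR.symm

theorem zfun_pos (m n : Fin k → ℤ) (h : m ≤ n) (hm : 0 ≤ m) :
    zfun x y h0 m n h = y.toFun m n h := by
  apply zfun_eq
  have hm0 : m ⊓ 0 = 0 := inf_eq_right.mpr hm
  have hn0 : n ⊔ 0 = n := sup_eq_left.mpr (hm.trans h)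
  have hgc : Λ.src (y.toFun m n h) = Λ.rng (y.toFun n n le_rfl) := compat y y h le_rfl rfl
  have hagc : Λ.src (y.toFun 0 m hm)
      = Λ.rng (Λ.comp (y.toFun m n h) (y.toFun n n le_rfl) hgc) := by
    rw [Λ.rng_comp]; exact compat y y hm h rfl
  refine ⟨deg_toFun y m n h, y.toFun 0 m hm, y.toFun n n le_rfl, hgc, hagc, ?_, ?_, ?_⟩
  · rw [deg_toFun]
    funext i
    have e1 : 0 ≤ m i := hm i
    simp only [pdeg, Pi.inf_apply, Pi.zero_apply]
    omega
  · rw [deg_toFun]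
    funext i
    have e1 : 0 ≤ n i := (hm.trans h) i
    simp only [pdeg, Pi.sup_apply, Pi.zero_apply]
    omega
  · have pf2 : Λ.src (y.toFun m n h) = Λ.rng (Λ.src (y.toFun m n h)) :=
      (Λ.rng_obj _ (Λ.deg_src _)).symm
    have e1 : Λ.comp (y.toFun m n h) (y.toFun n n le_rfl) hgc = y.toFun m n h :=
      (comp_congr rfl (y.src_eq m n h).symm hgc pf2).trans (Λ.comp_id _ pf2)
    have pfr : Λ.src (y.toFun 0 m hm) = Λ.rng (y.toFun m n h) := compat y y hm h rfl
    have eL : Λ.comp (y.toFun 0 m hm)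
        (Λ.comp (y.toFun m n h) (y.toFun n n le_rfl) hgc) hagc
        = y.toFun 0 n (hm.trans h) :=
      (comp_congr rfl e1 hagc pfr).trans (y.comp_eq 0 m n hm h)
    have eX : x.toFun (m ⊓ 0) 0 inf_le_right = Λ.rng (y.toFun 0 (n ⊔ 0) le_sup_right) :=
      (x.toFun_congr hm0 rfl inf_le_right le_rfl).trans
        (h0.trans (y.rng_eq 0 (n ⊔ 0) le_sup_right).symm)
    have pf : Λ.src (Λ.rng (y.toFun 0 (n ⊔ 0) le_sup_right))
        = Λ.rng (y.toFun 0 (n ⊔ 0) le_sup_right) := Λ.src_obj _ (Λ.deg_rng _)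
    have eR : W x y h0 m n = y.toFun 0 n (hm.trans h) :=
      ((comp_congr eX rfl (compat x y inf_le_right le_sup_right h0) pf).trans
        (Λ.id_comp _ pf)).trans (y.toFun_congr rfl hn0 le_sup_right (hm.trans h))
    exact eL.trans eR.symm

end BracketAux
/-- For `x, y ∈ Λ^Δ` with `x(0) = y(0)` there is a unique
`z ∈ Λ^Δ` agreeing with `x` on `m ≤ n ≤ 0` and with `y` on `0 ≤ m ≤ n`;
moreover `F_x ∩ E_y = {z}`. -/
theorem bracket_exists_unique {k : ℕ} (hk : 0 < k) (Λ : KGraph k)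
    (hstar : Λ.Star) (x y : TwoSidedPath Λ) (h0 : x.obj0 = y.obj0) :
    ∃ z : TwoSidedPath Λ,
      ((∀ m n (h : m ≤ n), n ≤ 0 → z.toFun m n h = x.toFun m n h) ∧
       (∀ m n (h : m ≤ n), 0 ≤ m → z.toFun m n h = y.toFun m n h)) ∧
      (∀ z' : TwoSidedPath Λ,
        ((∀ m n (h : m ≤ n), n ≤ 0 → z'.toFun m n h = x.toFun m n h) ∧
         (∀ m n (h : m ≤ n), 0 ≤ m → z'.toFun m n h = y.toFun m n h)) → z' = z) ∧
      Fx x ∩ Ex y = {z} := by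
  have huniq : ∀ z' : TwoSidedPath Λ,
      ((∀ m n (h : m ≤ n), n ≤ 0 → z'.toFun m n h = x.toFun m n h) ∧
       (∀ m n (h : m ≤ n), 0 ≤ m → z'.toFun m n h = y.toFun m n h)) →
      z' = BracketAux.zpath x y h0 := by
    rintro z' ⟨hx', hy'⟩
    apply BracketAux.tsp_ext
    intro m n h
    show z'.toFun m n h = BracketAux.zfun x y h0 m n h
    refine (BracketAux.zfun_eq x y h0 h ?_).symm
    have hgc : Λ.src (z'.toFun m n h) = Λ.rng (z'.toFun n (n ⊔ 0) le_sup_left) :=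
      BracketAux.compat z' z' h le_sup_left rfl
    have hagc : Λ.src (z'.toFun (m ⊓ 0) m inf_le_left)
        = Λ.rng (Λ.comp (z'.toFun m n h) (z'.toFun n (n ⊔ 0) le_sup_left) hgc) := by
      rw [Λ.rng_comp]; exact BracketAux.compat z' z' inf_le_left h rfl
    refine ⟨BracketAux.deg_toFun z' m n h, z'.toFun (m ⊓ 0) m inf_le_left,
      z'.toFun n (n ⊔ 0) le_sup_left, hgc, hagc,
      BracketAux.deg_toFun z' (m ⊓ 0) m inf_le_left,
      BracketAux.deg_toFun z' n (n ⊔ 0) le_sup_left, ?_⟩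
    have pf1 : Λ.src (z'.toFun (m ⊓ 0) m inf_le_left)
        = Λ.rng (z'.toFun m (n ⊔ 0) (h.trans le_sup_left)) :=
      BracketAux.compat z' z' inf_le_left (h.trans le_sup_left) rfl
    calc Λ.comp (z'.toFun (m ⊓ 0) m inf_le_left)
          (Λ.comp (z'.toFun m n h) (z'.toFun n (n ⊔ 0) le_sup_left) hgc) hagc
        = Λ.comp (z'.toFun (m ⊓ 0) m inf_le_left)
            (z'.toFun m (n ⊔ 0) (h.trans le_sup_left)) pf1 :=
          BracketAux.comp_congr rfl (z'.comp_eq m n (n ⊔ 0) h le_sup_left) hagc pf1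
      _ = z'.toFun (m ⊓ 0) (n ⊔ 0) (inf_le_left.trans (h.trans le_sup_left)) :=
          z'.comp_eq (m ⊓ 0) m (n ⊔ 0) inf_le_left (h.trans le_sup_left)
      _ = Λ.comp (z'.toFun (m ⊓ 0) 0 inf_le_right) (z'.toFun 0 (n ⊔ 0) le_sup_right)
            (BracketAux.compat z' z' inf_le_right le_sup_right rfl) :=
          (z'.comp_eq (m ⊓ 0) 0 (n ⊔ 0) inf_le_right le_sup_right).symm
      _ = Λ.comp (x.toFun (m ⊓ 0) 0 inf_le_right) (y.toFun 0 (n ⊔ 0) le_sup_right)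
            (BracketAux.compat x y inf_le_right le_sup_right h0) :=
          BracketAux.comp_congr (hx' (m ⊓ 0) 0 inf_le_right le_rfl)
            (hy' 0 (n ⊔ 0) le_sup_right le_rfl) _ _
      _ = BracketAux.W x y h0 m n := rfl
  refine ⟨BracketAux.zpath x y h0,
    ⟨fun m n h hn => BracketAux.zfun_neg x y h0 m n h hn,
     fun m n h hm => BracketAux.zfun_pos x y h0 m n h hm⟩, huniq, ?_⟩
  ext w
  simp only [Set.mem_inter_iff, Set.mem_singleton_iff, Fx, Ex, Set.mem_setOf_eq]
  constructor
  · rintro ⟨hF, hE⟩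
    exact huniq w ⟨hF, hE⟩
  · rintro rfl
    exact ⟨fun m n h hn => BracketAux.zfun_neg x y h0 m n h hn,
      fun m n h hm => BracketAux.zfun_pos x y h0 m n h hm⟩
end
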